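/- arXiv:1602.07072 — 12 statements merged into one kernel-verified Lean document; each statement's English description precedes it below -/
import Mathlib

section
/- Let p, q ∈ Ω with p < q. Then every supporting hyperplane of I that separates q from I also separates p from I; that is, 𝒫(q) ⊆ 𝒫(p). -/
open RealInnerProductSpace
open scoped Classical

noncomputable section

/-- Euclidean space of dimension `n`. -/
abbrev Euc (n : ℕ) := EuclideanSpace ℝ (Fin n)

/-- The exterior `Ω = E \ closure I` of the convex set `I`. -/
def Omega {n : ℕ} (I : Set (Euc n)) : Set (Euc n) := (closure I)ᶜ

/-- The timelike Funk partial order: `p < q` iff `p ≠ q`, the segment `[p,q]` lies in `Ω`,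
and the ray from `p` through `q` enters `I` beyond `q`. -/
def funkLt {n : ℕ} (I : Set (Euc n)) (p q : Euc n) : Prop :=
  p ≠ q ∧ segment ℝ p q ⊆ Omega I ∧ ∃ t > (0:ℝ), q + t • (q - p) ∈ I

/-- The parameter at which the ray from `p` through `q` first hits `closure I` (beyond `q`). -/
def funkT0 {n : ℕ} (I : Set (Euc n)) (p q : Euc n) : ℝ :=
  sInf {t : ℝ | 0 < t ∧ q + t • (q - p) ∈ closure I}

/-- The point `b(p,q)` where the ray from `p` through `q` first hits `K = frontier I`. -/
def funkB {n : ℕ} (I : Set (Euc n)) (p q : Euc n) : Euc n :=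
  q + funkT0 I p q • (q - p)

/-- The timelike Funk metric `F(p,q) = log (dist p b(p,q) / dist q b(p,q))`, with `F(p,p) = 0`. -/
def funkF {n : ℕ} (I : Set (Euc n)) (p q : Euc n) : ℝ :=
  if p = q then 0 else Real.log (dist p (funkB I p q) / dist q (funkB I p q))

/-- Supporting hyperplanes of `I`, encoded as pairs `(u, c)` with `‖u‖ = 1`:
`I ⊆ {x | ⟪u,x⟫ < c}` and `closure I` meets `{x | ⟪u,x⟫ = c}`. -/
def SuppH {n : ℕ} (I : Set (Euc n)) : Set (Euc n × ℝ) :=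
  {uc | ‖uc.1‖ = 1 ∧ I ⊆ {x | ⟪uc.1, x⟫ < uc.2} ∧
    (closure I ∩ {x | ⟪uc.1, x⟫ = uc.2}).Nonempty}

/-- `𝒫(z)`: supporting hyperplanes of `I` separating `z` from `I`. -/
def SuppHSep {n : ℕ} (I : Set (Euc n)) (z : Euc n) : Set (Euc n × ℝ) :=
  {uc | uc ∈ SuppH I ∧ uc.2 < ⟪uc.1, z⟫}

/-- `D(p)`: the cone of timelike directions at `p`. -/
def Dcone {n : ℕ} (I : Set (Euc n)) (p : Euc n) : Set (Euc n) :=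
  {v | ∃ t > (0:ℝ), p + t • v ∈ I}

/-- `τ(p,v)`: the time for the ray `p + t • v` to reach `closure I`. -/
def tauF {n : ℕ} (I : Set (Euc n)) (p v : Euc n) : ℝ :=
  sInf {t : ℝ | 0 < t ∧ p + t • v ∈ closure I}

/-- The timelike Minkowski functional `P(p,v) = 1/τ(p,v)` of the timelike Funk metric. -/
def Pmink {n : ℕ} (I : Set (Euc n)) (p v : Euc n) : ℝ := 1 / tauF I p v

/-- if `p < q` then every supporting hyperplane separating `q` from `I`
also separates `p` from `I`, i.e. `𝒫(q) ⊆ 𝒫(p)`. -/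
theorem suppHSep_subset_of_funkLt {n : ℕ} (hn : 1 ≤ n) (I : Set (Euc n))
    (hne : I.Nonempty) (hop : IsOpen I) (hconv : Convex ℝ I)
    (hcl : closure I ≠ Set.univ)
    (p q : Euc n) (hp : p ∈ Omega I) (hq : q ∈ Omega I)
    (hpq : funkLt I p q) :
    SuppHSep I q ⊆ SuppHSep I p := by
  rintro ⟨u, c⟩ ⟨hH, hqc⟩
  refine ⟨hH, ?_⟩
  obtain ⟨hu, hIu, _⟩ := hH
  obtain ⟨_, _, t, ht, hmem⟩ := hpq
  have h1 : ⟪u, q + t • (q - p)⟫ < c := hIu hmem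
  have h2 : ⟪u, q + t • (q - p)⟫ = ⟪u, q⟫ + t * (⟪u, q⟫ - ⟪u, p⟫) := by
    simp [inner_add_right, inner_smul_right, inner_sub_right]
  rw [h2] at h1
  simp only at hqc ⊢
  nlinarith
end
end

section
/- The relation < on Ω is transitive: for all p, q, r ∈ Ω, if p < q and q < r, then p < r. -/
open RealInnerProductSpace
open scoped Classical

noncomputable section

/-- the timelike Funk order relation `<` is transitive on `Ω`. -/
theorem funkLt_trans {n : ℕ} (hn : 1 ≤ n) (I : Set (Euc n))
    (hne : I.Nonempty) (hop : IsOpen I) (hconv : Convex ℝ I)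
    (hcl : closure I ≠ Set.univ)
    (p q r : Euc n) (hp : p ∈ Omega I) (hq : q ∈ Omega I) (hr : r ∈ Omega I)
    (hpq : funkLt I p q) (hqr : funkLt I q r) :
    funkLt I p r := by

  obtain ⟨hpq_ne, hpq_seg, s, hs, ha⟩ := hpq
  obtain ⟨hqr_ne, hqr_seg, u, hu, hb⟩ := hqr
  have hd : (0:ℝ) < 1 + s + u := by linarith
  have hc : r + (s * u / (1 + s + u)) • (r - p) ∈ I := by
    have key : r + (s * u / (1 + s + u)) • (r - p)
        = (u / (1 + s + u)) • (q + s • (q - p))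
          + ((1 + s) / (1 + s + u)) • (r + u • (r - q)) := by
      match_scalars <;> (field_simp [hd.ne']; try ring)
    rw [key]
    exact hconv ha hb (by positivity) (by positivity) (by field_simp [hd.ne']; try ring)
  have hpr_ne : p ≠ r := by
    rintro rfl
    exact hr (subset_closure (by simpa using hc))
  refine ⟨hpr_ne, ?_, ⟨s * u / (1 + s + u), by positivity, hc⟩⟩
  rintro x ⟨α, β, hα, hβ, hαβ, rfl⟩
  have hα' : α = 1 - β := by linarith
  subst hα'
  intro hx
  have hr' : r ∉ closure I := hr
  have hp' : p ∉ closure I := hp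
  have hβ1 : β < 1 := by
    rcases lt_or_eq_of_le (by linarith : β ≤ 1) with h | h
    · exact h
    · exfalso; apply hr'; rw [h] at hx; simpa using hx
  have hβ0 : 0 < β := by
    rcases lt_or_eq_of_le hβ with h | h
    · exact h
    · exfalso; apply hp'; rw [← h] at hx; simpa using hx
  have hden : (0:ℝ) < 1 + s - β := by linarith
  set ν : ℝ := s / (1 + s - β) with hν
  have hν0 : 0 < ν := by positivity
  have hν1 : ν < 1 := by
    rw [hν, div_lt_one hden]; linarith
  have hyI : (1 - ν) • (q + s • (q - p)) + ν • ((1 - β) • p + β • r) ∈ interior I :=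
    hconv.combo_interior_closure_mem_interior (by rwa [hop.interior_eq]) hx
      (by linarith) (by linarith) (by ring)
  have hyseg : (1 - ν) • (q + s • (q - p)) + ν • ((1 - β) • p + β • r)
      ∈ segment ℝ q r := by
    refine ⟨(1 - ν) * (1 + s), ν * β, ?_, ?_, ?_, ?_⟩
    · have : (0:ℝ) ≤ 1 - ν := by linarith
      positivity
    · positivity
    · rw [hν]; field_simp [hden.ne']; try ring
    · match_scalars <;> (rw [hν]; field_simp [hden.ne']; try ring)
  exact hqr_seg hyseg (subset_closure (hop.interior_eq ▸ hyI))
end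
end

section
/- Let p, q ∈ Ω with p < q and let b = b(p,q). For every supporting hyperplane π₀ = {x : ⟪u, x⟫ = c} ∈ 𝒫 with b ∈ π₀, the point q does not lie on π₀, both p and q satisfy ⟪u, ·⟫ > c, and dist p b / dist q b = d(p, π₀) / d(q, π₀); consequently F(p,q) = Real.log (d(p, π₀) / d(q, π₀)). -/
open RealInnerProductSpace
open scoped Classical

noncomputable section

lemma infDist_hyperplane' {n : ℕ} (u : Euc n) (hu : ‖u‖ = 1) (c : ℝ) (x : Euc n) :
    Metric.infDist x {y : Euc n | ⟪u, y⟫ = c} = |⟪u, x⟫ - c| := by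
  set S := {y : Euc n | ⟪u, y⟫ = c} with hS
  set d : ℝ := ⟪u, x⟫ - c with hd
  have hy₀ : x - d • u ∈ S := by
    simp only [hS, Set.mem_setOf_eq, inner_sub_right, real_inner_smul_right,
      real_inner_self_eq_norm_sq, hu]
    ring
  have hdist : dist x (x - d • u) = |d| := by
    rw [dist_eq_norm]
    simp [norm_smul, hu]
  apply le_antisymm
  · calc Metric.infDist x S ≤ dist x (x - d • u) := Metric.infDist_le_dist_of_mem hy₀
      _ = |d| := hdist
  · by_contra h
    push_neg at h
    rw [Metric.infDist_lt_iff ⟨_, hy₀⟩] at h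
    obtain ⟨y, hy, hlt⟩ := h
    have h1 : |d| = |⟪u, x - y⟫| := by
      rw [inner_sub_right, hy.out]
    have h2 : |⟪u, x - y⟫| ≤ ‖u‖ * ‖x - y‖ := abs_real_inner_le_norm u (x - y)
    rw [hu, one_mul, ← dist_eq_norm] at h2
    linarith [h1 ▸ h2]


/-- for `p < q` and any supporting hyperplane `π₀ = {x | ⟪u,x⟫ = c}` of `I`
through `b = b(p,q)`: `q ∉ π₀`, both `p` and `q` satisfy `⟪u,·⟫ > c`,
`dist p b / dist q b = d(p,π₀)/d(q,π₀)`, and `F(p,q) = log (d(p,π₀)/d(q,π₀))`. -/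
theorem funkF_eq_log_infDist_div {n : ℕ} (hn : 1 ≤ n) (I : Set (Euc n))
    (hne : I.Nonempty) (hop : IsOpen I) (hconv : Convex ℝ I)
    (hcl : closure I ≠ Set.univ)
    (p q : Euc n) (hp : p ∈ Omega I) (hq : q ∈ Omega I)
    (hpq : funkLt I p q)
    (uc : Euc n × ℝ) (huc : uc ∈ SuppH I)
    (hb : ⟪uc.1, funkB I p q⟫ = uc.2) :
    ⟪uc.1, q⟫ ≠ uc.2 ∧
    uc.2 < ⟪uc.1, p⟫ ∧ uc.2 < ⟪uc.1, q⟫ ∧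
    dist p (funkB I p q) / dist q (funkB I p q) =
      Metric.infDist p {x | ⟪uc.1, x⟫ = uc.2} / Metric.infDist q {x | ⟪uc.1, x⟫ = uc.2} ∧
    funkF I p q =
      Real.log (Metric.infDist p {x | ⟪uc.1, x⟫ = uc.2} /
        Metric.infDist q {x | ⟪uc.1, x⟫ = uc.2}) := by
  obtain ⟨hnepq, hseg, t₁, ht₁pos, ht₁I⟩ := hpq
  obtain ⟨hu, hIsub, -⟩ := huc
  set u := uc.1
  set c := uc.2
  set t₀ := funkT0 I p q with ht₀def
  set S := {t : ℝ | 0 < t ∧ q + t • (q - p) ∈ closure I} with hSdef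
  have hSne : t₁ ∈ S := ⟨ht₁pos, subset_closure ht₁I⟩
  have hbdd : BddBelow S := ⟨0, fun t ht => ht.1.le⟩
  have hqp : (0:ℝ) < ‖q - p‖ := by
    rw [norm_pos_iff, sub_ne_zero]; exact fun h => hnepq h.symm
  -- t₀ > 0
  have hqnotcl : q ∉ closure I := hq
  have hclne : (closure I).Nonempty := hne.closure
  have hδ : 0 < Metric.infDist q (closure I) :=
    (isClosed_closure.notMem_iff_infDist_pos hclne).1 hqnotcl
  have ht₀pos : 0 < t₀ := by
    have hle : Metric.infDist q (closure I) / ‖q - p‖ ≤ t₀ := by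
      apply le_csInf ⟨t₁, hSne⟩
      intro t ht
      have h1 : Metric.infDist q (closure I) ≤ dist q (q + t • (q - p)) :=
        Metric.infDist_le_dist_of_mem ht.2
      have h2 : dist q (q + t • (q - p)) = t * ‖q - p‖ := by
        rw [dist_eq_norm]
        have : q - (q + t • (q - p)) = (-t) • (q - p) := by module
        rw [this, norm_smul]
        simp [abs_of_pos ht.1]
      rw [h2] at h1
      rw [div_le_iff₀ hqp]
      linarith
    exact lt_of_lt_of_le (div_pos hδ hqp) hle
  have ht₀le : t₀ ≤ t₁ := csInf_le hbdd hSne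
  have ht₀lt : t₀ < t₁ := by
    rcases lt_or_eq_of_le ht₀le with h | h
    · exact h
    · exfalso
      have : ⟪u, q + t₁ • (q - p)⟫ < c := hIsub ht₁I
      rw [← h] at this
      have hbeq : funkB I p q = q + t₀ • (q - p) := rfl
      rw [hbeq] at hb
      linarith [hb ▸ this]
  set m : ℝ := ⟪u, q - p⟫ with hmdef
  have hbexp : ⟪u, q⟫ + t₀ * m = c := by
    have : ⟪u, funkB I p q⟫ = ⟪u, q⟫ + t₀ * m := by
      rw [funkB, inner_add_right, real_inner_smul_right]
    linarith [this ▸ hb]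
  have ht₁lt : ⟪u, q⟫ + t₁ * m < c := by
    have : ⟪u, q + t₁ • (q - p)⟫ < c := hIsub ht₁I
    rwa [inner_add_right, real_inner_smul_right] at this
  have hm : m < 0 := by nlinarith
  have hqc : c < ⟪u, q⟫ := by nlinarith
  have hpm : ⟪u, p⟫ = ⟪u, q⟫ - m := by
    rw [hmdef, inner_sub_right]; ring
  have hpc : c < ⟪u, p⟫ := by rw [hpm]; linarith
  -- distances
  have hdq : dist q (funkB I p q) = t₀ * ‖q - p‖ := by
    rw [dist_eq_norm, funkB]
    have : q - (q + t₀ • (q - p)) = (-t₀) • (q - p) := by module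
    rw [this, norm_smul]
    simp [abs_of_pos ht₀pos]
  have hdp : dist p (funkB I p q) = (1 + t₀) * ‖q - p‖ := by
    rw [dist_eq_norm, funkB]
    have : p - (q + t₀ • (q - p)) = (-(1 + t₀)) • (q - p) := by module
    rw [this, norm_smul]
    rw [Real.norm_eq_abs, abs_neg, abs_of_pos (by linarith : (0:ℝ) < 1 + t₀)]
  -- infDists
  have hip : Metric.infDist p {x : Euc n | ⟪u, x⟫ = c} = (1 + t₀) * (-m) := by
    rw [infDist_hyperplane' u hu c p, abs_of_pos (by linarith : (0:ℝ) < ⟪u, p⟫ - c)]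
    rw [hpm]; linarith [hbexp]
  have hiq : Metric.infDist q {x : Euc n | ⟪u, x⟫ = c} = t₀ * (-m) := by
    rw [infDist_hyperplane' u hu c q, abs_of_pos (by linarith : (0:ℝ) < ⟪u, q⟫ - c)]
    linarith [hbexp]
  have hratio : dist p (funkB I p q) / dist q (funkB I p q) =
      Metric.infDist p {x : Euc n | ⟪u, x⟫ = c} / Metric.infDist q {x : Euc n | ⟪u, x⟫ = c} := by
    rw [hdp, hdq, hip, hiq]
    rw [div_eq_div_iff (by positivity) (ne_of_gt (mul_pos ht₀pos (by linarith : (0:ℝ) < -m)))]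
    ring
  refine ⟨ne_of_gt hqc, hpc, hqc, hratio, ?_⟩
  rw [funkF, if_neg hnepq, hratio]
end
end

section
/- Time inequality (reversed triangle inequality) for the timelike Funk metric: for all p, q, r ∈ Ω with p < q and q < r (so that also p < r), F(p,q) + F(q,r) ≤ F(p,r). -/
open RealInnerProductSpace
open scoped Classical

noncomputable section

lemma funk_basic {n : ℕ} {I : Set (Euc n)} (hop : IsOpen I) {p q : Euc n}
    (hq : q ∈ Omega I) (hray : ∃ t > (0:ℝ), q + t • (q - p) ∈ I) :
    0 < funkT0 I p q ∧ funkB I p q ∈ closure I ∧ funkB I p q ∉ I := by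
  obtain ⟨t₁, ht₁, ht₁I⟩ := hray
  set g : ℝ → Euc n := fun t => q + t • (q - p) with hg
  have hgc : Continuous g := by
    apply continuous_const.add
    exact continuous_id.smul continuous_const
  set S : Set ℝ := {t : ℝ | 0 < t ∧ q + t • (q - p) ∈ closure I} with hS
  have hne : S.Nonempty := ⟨t₁, ht₁, subset_closure ht₁I⟩
  have hbdd : BddBelow S := ⟨0, fun t ht => le_of_lt ht.1⟩
  have hT0 : funkT0 I p q = sInf S := rfl
  have hqnc : q ∉ closure I := hq
  have hopen : IsOpen (g ⁻¹' (closure I)ᶜ) := (isClosed_closure.isOpen_compl).preimage hgc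
  have h0 : (0:ℝ) ∈ g ⁻¹' (closure I)ᶜ := by
    simp only [Set.mem_preimage, hg, zero_smul, add_zero, Set.mem_compl_iff]
    exact hqnc
  obtain ⟨ε, hε, hball⟩ := Metric.isOpen_iff.1 hopen 0 h0
  have hεle : ∀ t ∈ S, ε ≤ t := by
    intro t ht
    by_contra hlt
    push_neg at hlt
    have hb : t ∈ Metric.ball (0:ℝ) ε := by
      simp only [Metric.mem_ball, Real.dist_eq, sub_zero, abs_of_pos ht.1]
      exact hlt
    exact (hball hb) ht.2
  have hpos : 0 < funkT0 I p q := lt_of_lt_of_le hε (hT0 ▸ le_csInf hne hεle)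
  have hmem : funkB I p q ∈ closure I := by
    set S' : Set ℝ := Set.Ici (sInf S) ∩ g ⁻¹' (closure I) with hS'
    have hsub : S ⊆ S' := fun t ht => ⟨csInf_le hbdd ht, ht.2⟩
    have hclS : IsClosed S' := isClosed_Ici.inter (isClosed_closure.preimage hgc)
    have hbdd' : BddBelow S' := ⟨sInf S, fun t ht => ht.1⟩
    have hne' : S'.Nonempty := hne.mono hsub
    have heq : sInf S' = sInf S :=
      le_antisymm (csInf_le_csInf hbdd' hne hsub) (le_csInf hne' fun t ht => ht.1)
    have hmm := hclS.csInf_mem hne' hbdd'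
    rw [heq] at hmm
    exact hmm.2
  refine ⟨hpos, hmem, ?_⟩
  intro hbI
  have hbI' : funkT0 I p q ∈ g ⁻¹' I := hbI
  obtain ⟨δ, hδ, hball'⟩ := Metric.isOpen_iff.1 (hop.preimage hgc) _ hbI'
  set m := min (δ/2) (funkT0 I p q / 2) with hm
  have hmpos : 0 < m := lt_min (by linarith) (by linarith)
  have hmle : m ≤ δ/2 := min_le_left _ _
  have hmle2 : m ≤ funkT0 I p q / 2 := min_le_right _ _
  set t := funkT0 I p q - m with htdef
  have htS : t ∈ S := by
    constructor
    · simp only [htdef]; linarith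
    · apply subset_closure
      have hdist : dist t (funkT0 I p q) < δ := by
        rw [Real.dist_eq]
        have : t - funkT0 I p q = -m := by rw [htdef]; ring
        rw [this, abs_neg, abs_of_pos hmpos]
        linarith
      exact hball' hdist
  have := csInf_le hbdd htS
  rw [← hT0] at this
  simp only [htdef] at this
  linarith

lemma funkF_val {n : ℕ} {I : Set (Euc n)} {p q : Euc n} (hne : p ≠ q)
    (hpos : 0 < funkT0 I p q) :
    funkF I p q = Real.log ((1 + funkT0 I p q) / funkT0 I p q) := by
  set T := funkT0 I p q with hT
  have hqp : q - p ≠ 0 := sub_ne_zero.2 (Ne.symm hne)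
  have hnorm : ‖q - p‖ ≠ 0 := norm_ne_zero_iff.2 hqp
  rw [funkF, if_neg hne]
  congr 1
  have h1 : p - funkB I p q = -((1+T) • (q - p)) := by
    rw [funkB, ← hT]; module
  have h2 : q - funkB I p q = -(T • (q - p)) := by
    rw [funkB, ← hT]; module
  rw [dist_eq_norm, dist_eq_norm, h1, h2, norm_neg, norm_neg, norm_smul, norm_smul,
    Real.norm_eq_abs, Real.norm_eq_abs, abs_of_pos (by linarith : (0:ℝ) < 1 + T),
    abs_of_pos hpos, mul_div_mul_right _ _ hnorm]

lemma funkF_le_of_sep {n : ℕ} {I : Set (Euc n)} (hop : IsOpen I) {p q : Euc n}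
    (hq : q ∈ Omega I) (hpq : funkLt I p q) (f : Euc n →L[ℝ] ℝ) (c : ℝ)
    (hfI : ∀ x ∈ I, f x < c) (hfq : c < f q) :
    c < f p ∧ funkF I p q ≤ Real.log ((f p - c) / (f q - c)) := by
  obtain ⟨hne, hseg, hray⟩ := hpq
  obtain ⟨hT, hbcl, -⟩ := funk_basic hop hq hray
  set T := funkT0 I p q with hTdef
  have hclle : ∀ x ∈ closure I, f x ≤ c := by
    intro x hx
    have hsub : closure I ⊆ {y | f y ≤ c} :=
      closure_minimal (fun y hy => (hfI y hy).le) (isClosed_le f.continuous continuous_const)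
    exact hsub hx
  have hfb : f q + T * (f q - f p) ≤ c := by
    have h := hclle _ hbcl
    rw [funkB, ← hTdef] at h
    simpa [map_add, map_smul, map_sub, smul_eq_mul, mul_sub] using h
  have hwneg : f q - f p < 0 := by
    by_contra h
    push_neg at h
    have := mul_nonneg hT.le h
    linarith
  have hcp : c < f p := by linarith
  refine ⟨hcp, ?_⟩
  have hQc : 0 < f q - c := sub_pos.2 hfq
  rw [funkF_val hne hT]
  apply Real.log_le_log (div_pos (by linarith) hT)
  rw [div_le_div_iff₀ hT hQc]
  nlinarith [hfb, hfq]

lemma funkF_eq_of_supp {n : ℕ} {I : Set (Euc n)} (hop : IsOpen I) {p q : Euc n}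
    (hq : q ∈ Omega I) (hpq : funkLt I p q) (f : Euc n →L[ℝ] ℝ)
    (hfI : ∀ x ∈ I, f x < f (funkB I p q)) :
    f (funkB I p q) < f q ∧
    funkF I p q = Real.log ((f p - f (funkB I p q)) / (f q - f (funkB I p q))) := by
  obtain ⟨hne, hseg, hray⟩ := hpq
  obtain ⟨hT, hbcl, -⟩ := funk_basic hop hq hray
  set T := funkT0 I p q with hTdef
  set c := f (funkB I p q) with hcdef
  have hc : c = f q + T * (f q - f p) := by
    rw [hcdef, funkB, ← hTdef]
    simp [map_add, map_smul, map_sub, smul_eq_mul, mul_sub]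
  obtain ⟨t', ht', ht'I⟩ := hray
  have hft' : f q + t' * (f q - f p) < c := by
    have h := hfI _ ht'I
    simpa [map_add, map_smul, map_sub, smul_eq_mul, mul_sub] using h
  have hTle : T ≤ t' := csInf_le ⟨0, fun s hs => hs.1.le⟩ ⟨ht', subset_closure ht'I⟩
  have hw : f q - f p < 0 := by
    by_contra h
    push_neg at h
    have := mul_le_mul_of_nonneg_right hTle h
    linarith
  have hTw : T * (f q - f p) < 0 := mul_neg_of_pos_of_neg hT hw
  have hcq : c < f q := by linarith
  refine ⟨hcq, ?_⟩
  rw [funkF_val hne hT]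
  congr 1
  have hQc : f q - c ≠ 0 := ne_of_gt (sub_pos.2 hcq)
  rw [div_eq_div_iff (ne_of_gt hT) hQc]
  linear_combination -hc

/-- the time inequality (reversed triangle inequality) for the timelike
Funk metric: if `p < q` and `q < r`, then `F(p,q) + F(q,r) ≤ F(p,r)`. -/
theorem funkF_time_inequality {n : ℕ} (hn : 1 ≤ n) (I : Set (Euc n))
    (hne : I.Nonempty) (hop : IsOpen I) (hconv : Convex ℝ I)
    (hcl : closure I ≠ Set.univ)
    (p q r : Euc n) (hp : p ∈ Omega I) (hq : q ∈ Omega I) (hr : r ∈ Omega I)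
    (hpq : funkLt I p q) (hqr : funkLt I q r) :
    funkLt I p r ∧ funkF I p q + funkF I q r ≤ funkF I p r := by
  obtain ⟨hpq_ne, hpq_seg, t, ht, htI⟩ := hpq
  obtain ⟨hqr_ne, hqr_seg, s, hs, hsI⟩ := hqr
  -- (a) p ≠ r
  have hpr_ne : p ≠ r := by
    rintro rfl
    have hden : (t:ℝ) + s + 1 ≠ 0 := by positivity
    have key : q = ((s+1)/(t+s+1)) • (q + t • (q - p)) + (t/(t+s+1)) • (p + s • (p - q)) := by
      match_scalars <;> field_simp <;> ring
    have hq' : q ∈ I := by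
      rw [key]
      exact hconv htI hsI (by positivity) (by positivity) (by field_simp; ring)
    exact hq (subset_closure hq')
  -- (b) ray condition for (p, r)
  have hden : (1:ℝ) + t + s ≠ 0 := by positivity
  have hray_pr : ∃ u > (0:ℝ), r + u • (r - p) ∈ I := by
    refine ⟨s*t/(1+t+s), by positivity, ?_⟩
    have key : r + (s*t/(1+t+s)) • (r - p)
        = (s/(1+t+s)) • (q + t • (q - p)) + ((1+t)/(1+t+s)) • (r + s • (r - q)) := by
      match_scalars <;> field_simp <;> ring
    rw [key]
    exact hconv htI hsI (by positivity) (by positivity) (by field_simp; ring)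
  -- (c) segment [p,r] ⊆ Omega
  have hseg_pr : segment ℝ p r ⊆ Omega I := by
    rintro x ⟨a, b, ha, hb, hab, rfl⟩
    simp only [Omega, Set.mem_compl_iff]
    intro hxcl
    by_cases hb1 : b = 1
    · have ha0 : a = 0 := by linarith
      rw [ha0, hb1, zero_smul, one_smul, zero_add] at hxcl
      exact hr hxcl
    · have hb' : b < 1 := lt_of_le_of_ne (by linarith) hb1
      have ha' : 0 < a := by linarith
      have hat : 0 < a + t := by linarith
      set μ := a/(a+t) with hμ
      have hμ0 : 0 ≤ μ := div_nonneg ha'.le hat.le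
      have hμ1 : μ ≤ 1 := by
        rw [hμ, div_le_one hat]; linarith
      have hy : μ • (q + t • (q - p)) + (1-μ) • (a • p + b • r)
          = (μ*(1+t)) • q + ((1-μ)*b) • r := by
        rw [hμ]
        match_scalars <;> field_simp <;> ring
      have hymem : (μ*(1+t)) • q + ((1-μ)*b) • r ∈ closure I := by
        rw [← hy]
        exact hconv.closure (subset_closure htI) hxcl hμ0 (by linarith) (by ring)
      have hsum : μ*(1+t) + (1-μ)*b = 1 := by
        rw [hμ]
        field_simp
        linear_combination t * hab
      have hyseg : (μ*(1+t)) • q + ((1-μ)*b) • r ∈ segment ℝ q r :=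
        ⟨μ*(1+t), (1-μ)*b, by positivity, mul_nonneg (by linarith) hb, hsum, rfl⟩
      exact (hqr_seg hyseg) hymem
  have hpr : funkLt I p r := ⟨hpr_ne, hseg_pr, hray_pr⟩
  refine ⟨hpr, ?_⟩
  -- supporting hyperplane at b(p,r)
  obtain ⟨hTpr, hBcl, hBnI⟩ := funk_basic hop hr hpr.2.2
  obtain ⟨f, hf⟩ := geometric_hahn_banach_open_point hconv hop hBnI
  set c := f (funkB I p r) with hcdef
  obtain ⟨hcr, hFpr⟩ := funkF_eq_of_supp hop hr hpr f hf
  have hcq : c < f q := by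
    have h := hf _ hsI
    have h2 : f r + s * (f r - f q) < c := by
      simpa [map_add, map_smul, map_sub, smul_eq_mul, mul_sub] using h
    have hw : f r - f q < 0 := by
      by_contra hcon
      push_neg at hcon
      have := mul_nonneg hs.le hcon
      linarith
    linarith
  have hle1 := funkF_le_of_sep hop hq ⟨hpq_ne, hpq_seg, t, ht, htI⟩ f c hf hcq
  have hle2 := funkF_le_of_sep hop hr ⟨hqr_ne, hqr_seg, s, hs, hsI⟩ f c hf hcr
  have h1 : 0 < f p - c := sub_pos.2 hle1.1
  have h2 : 0 < f q - c := sub_pos.2 hcq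
  have h3 : 0 < f r - c := sub_pos.2 hcr
  calc funkF I p q + funkF I q r
      ≤ Real.log ((f p - c)/(f q - c)) + Real.log ((f q - c)/(f r - c)) :=
        add_le_add hle1.2 hle2.2
    _ = Real.log ((f p - c)/(f r - c)) := by
        rw [← Real.log_mul (ne_of_gt (div_pos h1 h2)) (ne_of_gt (div_pos h2 h3))]
        congr 1
        field_simp
    _ = funkF I p r := hFpr.symm
end
end

section
/- Euclidean segments are geodesics of the timelike Funk metric: for all p, q, r ∈ Ω with p < q, q < r and q ∈ openSegment ℝ p r (i.e. p, q, r collinear with q strictly between p and r), the time inequality is an equality: F(p,q) + F(q,r) = F(p,r). -/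
open RealInnerProductSpace
open scoped Classical

noncomputable section
set_option maxHeartbeats 1000000

lemma funkT0_mem {n : ℕ} (I : Set (Euc n)) (p q : Euc n) (hq : q ∉ closure I)
    (h : ∃ t > (0:ℝ), q + t • (q - p) ∈ closure I) :
    0 < funkT0 I p q ∧ q + funkT0 I p q • (q - p) ∈ closure I := by
  set A : Set ℝ := {t : ℝ | 0 < t ∧ q + t • (q - p) ∈ closure I} with hA
  obtain ⟨t, ht, htm⟩ := h
  have hAne : A.Nonempty := ⟨t, ht, htm⟩
  have hAbdd : BddBelow A := ⟨0, fun x hx => le_of_lt hx.1⟩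
  have hcont : Continuous (fun t : ℝ => q + t • (q - p)) := by continuity
  have hC : IsClosed {t : ℝ | 0 ≤ t ∧ q + t • (q - p) ∈ closure I} :=
    (isClosed_Ici.preimage continuous_id).inter (isClosed_closure.preimage hcont)
  have hsub : A ⊆ {t : ℝ | 0 ≤ t ∧ q + t • (q - p) ∈ closure I} :=
    fun x hx => ⟨le_of_lt hx.1, hx.2⟩
  have hmem : sInf A ∈ {t : ℝ | 0 ≤ t ∧ q + t • (q - p) ∈ closure I} :=
    hC.closure_subset ((closure_mono hsub) (csInf_mem_closure hAne hAbdd))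
  have hne0 : sInf A ≠ 0 := by
    intro h0
    apply hq
    have := hmem.2
    rw [h0] at this
    simpa using this
  exact ⟨lt_of_le_of_ne hmem.1 (Ne.symm hne0), hmem.2⟩

lemma funkT0_le {n : ℕ} (I : Set (Euc n)) (p q : Euc n) (t : ℝ) (ht : 0 < t)
    (hm : q + t • (q - p) ∈ closure I) : funkT0 I p q ≤ t :=
  csInf_le ⟨0, fun x hx => le_of_lt hx.1⟩ ⟨ht, hm⟩

/-- Euclidean segments are geodesics of the timelike Funk metric:
if `p < q`, `q < r` and `q` lies strictly between `p` and `r` on a Euclidean segment,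
then the time inequality is an equality. -/
theorem funkF_add_eq_of_openSegment {n : ℕ} (hn : 1 ≤ n) (I : Set (Euc n))
    (hne : I.Nonempty) (hop : IsOpen I) (hconv : Convex ℝ I)
    (hcl : closure I ≠ Set.univ)
    (p q r : Euc n) (hp : p ∈ Omega I) (hq : q ∈ Omega I) (hr : r ∈ Omega I)
    (hpq : funkLt I p q) (hqr : funkLt I q r)
    (hseg : q ∈ openSegment ℝ p r) :
    funkF I p q + funkF I q r = funkF I p r := by
  obtain ⟨a, s, ha, hs, has, hqe⟩ := hseg
  have hs1 : s < 1 := by linarith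
  set d : Euc n := r - p with hd_def
  have hqp : q = p + s • d := by
    rw [← hqe]
    have haeq : a = 1 - s := by linarith
    rw [haeq, hd_def]
    module
  have hpr : p ≠ r := by
    intro h
    apply hpq.1
    rw [hqp, hd_def, ← h]
    simp
  have hd0 : d ≠ 0 := sub_ne_zero.mpr (Ne.symm hpr)
  have hqmp : q - p = s • d := by rw [hqp]; abel
  have hrmq : r - q = (1 - s) • d := by rw [hqp, hd_def]; module
  have hrp : r = p + (1:ℝ) • d := by rw [hd_def]; module
  -- nothing in segment [p,r] is in closure I
  have hS01 : ∀ u : ℝ, 0 ≤ u → u ≤ 1 → p + u • d ∉ closure I := by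
    intro u hu0 hu1 hmem
    rcases le_or_gt u s with h | h
    · apply hpq.2.1
      · show p + u • d ∈ segment ℝ p q
        rw [segment_eq_image']
        rw [hqmp]
        refine ⟨u / s, ⟨div_nonneg hu0 hs.le, (div_le_one hs).mpr h⟩, ?_⟩
        show p + (u / s) • s • d = p + u • d
        rw [smul_smul, div_mul_cancel₀ _ (ne_of_gt hs)]
      · exact hmem
    · apply hqr.2.1
      · show p + u • d ∈ segment ℝ q r
        rw [segment_eq_image']
        rw [hrmq]
        refine ⟨(u - s) / (1 - s), ⟨div_nonneg (by linarith) (by linarith),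
          (div_le_one (by linarith)).mpr (by linarith)⟩, ?_⟩
        show q + ((u - s) / (1 - s)) • (1 - s) • d = p + u • d
        rw [smul_smul, div_mul_cancel₀ _ (by linarith : (1:ℝ) - s ≠ 0), hqp]
        module
      · exact hmem
  have hcl_gt1 : ∀ u : ℝ, 0 < u → p + u • d ∈ closure I → 1 < u := by
    intro u hu hmem
    by_contra h
    exact hS01 u hu.le (not_lt.mp h) hmem
  -- the three t0's
  have hq_ncl : q ∉ closure I := hq
  have hr_ncl : r ∉ closure I := hr
  obtain ⟨tpq, htpq, hImem⟩ := hpq.2.2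
  have h1 := funkT0_mem I p q hq_ncl ⟨tpq, htpq, subset_closure hImem⟩
  obtain ⟨tqr, htqr, hImem2⟩ := hqr.2.2
  have h2 := funkT0_mem I q r hr_ncl ⟨tqr, htqr, subset_closure hImem2⟩
  set t1 := funkT0 I p q with ht1_def
  set t2 := funkT0 I q r with ht2_def
  -- express hit points on the line
  have hb1 : q + t1 • (q - p) = p + (s * (1 + t1)) • d := by
    rw [hqmp, hqp]; module
  have hb2 : r + t2 • (r - q) = p + (1 + t2 * (1 - s)) • d := by
    rw [hrmq, hrp]; module
  set u1 : ℝ := s * (1 + t1) with hu1_def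
  set u2 : ℝ := 1 + t2 * (1 - s) with hu2_def
  have hu1_pos : 0 < u1 := by nlinarith [h1.1]
  have hu2_gt1 : 1 < u2 := by nlinarith [h2.1]
  have hu1_cl : p + u1 • d ∈ closure I := by rw [← hb1]; exact h1.2
  have hu2_cl : p + u2 • d ∈ closure I := by rw [← hb2]; exact h2.2
  have hu1_gt1 : 1 < u1 := hcl_gt1 u1 hu1_pos hu1_cl
  -- β = first hit parameter on the line from p through r
  have h3pre : ∃ t > (0:ℝ), r + t • (r - p) ∈ closure I := by
    refine ⟨u2 - 1, by linarith, ?_⟩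
    rw [hrp]
    have : p + (1:ℝ) • d + (u2 - 1) • (p + (1:ℝ) • d - p) = p + u2 • d := by module
    rw [this]; exact hu2_cl
  have h3 := funkT0_mem I p r hr_ncl h3pre
  set t3 := funkT0 I p r with ht3_def
  have hb3 : r + t3 • (r - p) = p + (1 + t3) • d := by rw [hrp]; module
  set u3 : ℝ := 1 + t3 with hu3_def
  have hu3_gt1 : 1 < u3 := by nlinarith [h3.1]
  have hu3_cl : p + u3 • d ∈ closure I := by rw [← hb3]; exact h3.2
  -- show u1 = u2 = u3 by mutual minimality
  -- from any hit at parameter β>1, we get t1 ≤ β/s - 1, t2 ≤ (β-1)/(1-s), t3 ≤ β-1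
  have min1 : ∀ β : ℝ, 1 < β → p + β • d ∈ closure I → u1 ≤ β := by
    intro β hβ hβm
    have hts : 0 < β / s - 1 := by
      have : 1 < β / s := (one_lt_div hs).mpr (by linarith)
      linarith
    have hmem : q + (β / s - 1) • (q - p) ∈ closure I := by
      rw [hqmp, hqp]
      have : p + s • d + (β / s - 1) • s • d = p + (s * (β/s)) • d := by module
      rw [this, mul_div_cancel₀ _ (ne_of_gt hs)]
      exact hβm
    have := funkT0_le I p q _ hts hmem
    rw [← ht1_def] at this
    rw [hu1_def]
    calc s * (1 + t1) ≤ s * (1 + (β / s - 1)) := by nlinarith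
    _ = β := by field_simp; ring
  have min2 : ∀ β : ℝ, 1 < β → p + β • d ∈ closure I → u2 ≤ β := by
    intro β hβ hβm
    have hts : 0 < (β - 1) / (1 - s) := div_pos (by linarith) (by linarith)
    have hmem : r + ((β - 1) / (1 - s)) • (r - q) ∈ closure I := by
      rw [hrmq, hrp]
      have : p + (1:ℝ) • d + ((β - 1) / (1 - s)) • (1 - s) • d
          = p + (1 + ((β - 1) / (1 - s)) * (1 - s)) • d := by module
      rw [this, div_mul_cancel₀ _ (by linarith : (1:ℝ) - s ≠ 0)]
      have : 1 + (β - 1) = β := by ring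
      rw [this]
      exact hβm
    have := funkT0_le I q r _ hts hmem
    rw [← ht2_def] at this
    rw [hu2_def]
    have h1s : 0 < 1 - s := by linarith
    calc 1 + t2 * (1 - s) ≤ 1 + ((β - 1) / (1 - s)) * (1 - s) := by nlinarith
    _ = β := by field_simp; ring
  have min3 : ∀ β : ℝ, 1 < β → p + β • d ∈ closure I → u3 ≤ β := by
    intro β hβ hβm
    have hmem : r + (β - 1) • (r - p) ∈ closure I := by
      rw [hrp]
      have : p + (1:ℝ) • d + (β - 1) • (p + (1:ℝ) • d - p) = p + β • d := by module
      rw [this]; exact hβm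
    have := funkT0_le I p r _ (by linarith) hmem
    rw [← ht3_def] at this
    rw [hu3_def]; linarith
  have e12 : u1 = u2 := le_antisymm (min1 u2 hu2_gt1 hu2_cl) (min2 u1 hu1_gt1 hu1_cl)
  have e13 : u1 = u3 := le_antisymm (min1 u3 hu3_gt1 hu3_cl) (min3 u1 hu1_gt1 hu1_cl)
  set β := u1 with hβ_def
  -- the common hit point
  have hB1 : funkB I p q = p + β • d := by rw [funkB, ← ht1_def, hb1]
  have hB2 : funkB I q r = p + β • d := by rw [funkB, ← ht2_def, hb2, ← e12]
  have hB3 : funkB I p r = p + β • d := by rw [funkB, ← ht3_def, hb3, ← e13]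
  -- distances
  have hnd : 0 < ‖d‖ := norm_pos_iff.mpr hd0
  have hdist_p : dist p (p + β • d) = β * ‖d‖ := by
    rw [dist_eq_norm]
    have : p - (p + β • d) = (-β) • d := by module
    rw [this, norm_smul]
    simp [abs_of_pos (by linarith : (0:ℝ) < β)]
  have hdist_q : dist q (p + β • d) = (β - s) * ‖d‖ := by
    rw [dist_eq_norm, hqp]
    have : p + s • d - (p + β • d) = (s - β) • d := by module
    rw [this, norm_smul, Real.norm_eq_abs]
    rw [abs_of_neg (by linarith : s - β < 0)]
    ring
  have hdist_r : dist r (p + β • d) = (β - 1) * ‖d‖ := by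
    rw [dist_eq_norm, hrp]
    have : p + (1:ℝ) • d - (p + β • d) = (1 - β) • d := by module
    rw [this, norm_smul, Real.norm_eq_abs]
    rw [abs_of_neg (by linarith : 1 - β < 0)]
    ring
  have hqr_ne : q ≠ r := hqr.1
  have hA : (0:ℝ) < β * ‖d‖ := by positivity
  have hB : (0:ℝ) < (β - s) * ‖d‖ := by
    have : 0 < β - s := by linarith
    positivity
  have hC : (0:ℝ) < (β - 1) * ‖d‖ := by
    have : 0 < β - 1 := by linarith
    positivity
  rw [funkF, funkF, funkF, if_neg hpq.1, if_neg hqr_ne, if_neg hpr,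
    hB1, hB2, hB3, hdist_p, hdist_q, hdist_r]
  rw [Real.log_div (ne_of_gt hA) (ne_of_gt hB), Real.log_div (ne_of_gt hB) (ne_of_gt hC),
    Real.log_div (ne_of_gt hA) (ne_of_gt hC)]
  ring
end
end

section
/- A Euclidean ray toward the boundary is isometric to a Euclidean half-line: let p, q ∈ Ω with p < q and b = b(p,q). For all real numbers 0 ≤ s < t < 1, setting x = p + s • (b − p) and y = p + t • (b − p), we have x, y ∈ Ω, x < y, and F(x,y) = Real.log ((1 − s)/(1 − t)). In particular, the map p + s • (b − p) ↦ −Real.log (1 − s) carries the timelike Funk distance on the segment [p, b) to the usual difference metric on [0, ∞). -/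
open RealInnerProductSpace
open scoped Classical

noncomputable section

lemma firstHit {n : ℕ} {C : Set (Euc n)} (hC : IsClosed C) (a v : Euc n)
    (ha : a ∉ C) (hne : {t : ℝ | 0 < t ∧ a + t • v ∈ C}.Nonempty) :
    0 < sInf {t : ℝ | 0 < t ∧ a + t • v ∈ C} ∧
    a + sInf {t : ℝ | 0 < t ∧ a + t • v ∈ C} • v ∈ C ∧
    ∀ r, 0 < r → r < sInf {t : ℝ | 0 < t ∧ a + t • v ∈ C} → a + r • v ∉ C := by
  set S := {t : ℝ | 0 < t ∧ a + t • v ∈ C} with hS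
  have hbdd : BddBelow S := ⟨0, fun x hx => le_of_lt hx.1⟩
  have hcont : Continuous fun t : ℝ => a + t • v := by continuity
  have hopen : IsOpen ((fun t : ℝ => a + t • v) ⁻¹' Cᶜ) := hC.isOpen_compl.preimage hcont
  have h0 : (0:ℝ) ∈ (fun t : ℝ => a + t • v) ⁻¹' Cᶜ := by simp [ha]
  obtain ⟨ε, hε, hball⟩ := Metric.isOpen_iff.mp hopen 0 h0
  have hlb : ∀ x ∈ S, ε ≤ x := by
    intro x hx
    by_contra h
    push_neg at h
    have hxball : x ∈ Metric.ball (0:ℝ) ε := by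
      simp [Real.norm_eq_abs, abs_of_pos hx.1, h, Metric.mem_ball, Real.dist_eq]
    exact (hball hxball) hx.2
  have hpos : 0 < sInf S := lt_of_lt_of_le hε (le_csInf hne hlb)
  have hsub : closure S ⊆ (fun t : ℝ => a + t • v) ⁻¹' C :=
    closure_minimal (fun x hx => hx.2) (hC.preimage hcont)
  have hmem := hsub (csInf_mem_closure hne hbdd)
  exact ⟨hpos, hmem, fun r hr hrlt hmemC => absurd (csInf_le hbdd ⟨hr, hmemC⟩) (not_le.mpr hrlt)⟩

/-- a Euclidean ray toward the boundary is isometric to a Euclidean half-line: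
for `p < q`, `b = b(p,q)` and `0 ≤ s < t < 1`, the points `x = p + s • (b − p)` and
`y = p + t • (b − p)` lie in `Ω`, satisfy `x < y`, and `F(x,y) = log ((1−s)/(1−t))`;
that is, `p + s • (b − p) ↦ −log (1−s)` carries the timelike Funk distance on `[p,b)`
to the difference metric on `[0,∞)`. -/
theorem funkF_on_ray {n : ℕ} (hn : 1 ≤ n) (I : Set (Euc n))
    (hne : I.Nonempty) (hop : IsOpen I) (hconv : Convex ℝ I)
    (hcl : closure I ≠ Set.univ)
    (p q : Euc n) (hp : p ∈ Omega I) (hq : q ∈ Omega I)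
    (hpq : funkLt I p q)
    (s t : ℝ) (hs : 0 ≤ s) (hst : s < t) (ht : t < 1) :
    p + s • (funkB I p q - p) ∈ Omega I ∧
    p + t • (funkB I p q - p) ∈ Omega I ∧
    funkLt I (p + s • (funkB I p q - p)) (p + t • (funkB I p q - p)) ∧
    funkF I (p + s • (funkB I p q - p)) (p + t • (funkB I p q - p)) =
      Real.log ((1 - s) / (1 - t)) ∧
    funkF I (p + s • (funkB I p q - p)) (p + t • (funkB I p q - p)) =
      (-Real.log (1 - t)) - (-Real.log (1 - s)) := by
  
  simp only [Omega, Set.mem_compl_iff] at hp hq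
  obtain ⟨hne', hseg, t', ht'pos, ht'I⟩ := hpq
  have hSne : {r : ℝ | 0 < r ∧ q + r • (q - p) ∈ closure I}.Nonempty :=
    ⟨t', ht'pos, subset_closure ht'I⟩
  obtain ⟨ht0pos, hbC, hbefore⟩ := firstHit isClosed_closure q (q - p) hq hSne
  have ht0eq : funkT0 I p q = sInf {r : ℝ | 0 < r ∧ q + r • (q - p) ∈ closure I} := rfl
  rw [← ht0eq] at ht0pos hbC hbefore
  set t₀ := funkT0 I p q with ht0def
  have hbC' : funkB I p q ∈ closure I := hbC
  have hw : funkB I p q - p = (1 + t₀) • (q - p) := by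
    show q + t₀ • (q - p) - p = (1 + t₀) • (q - p)
    module
  -- all points strictly before b on the ray are in Ω
  have hΩ : ∀ u : ℝ, 0 ≤ u → u < 1 → p + u • (funkB I p q - p) ∉ closure I := by
    intro u hu0 hu1
    rw [hw]
    have key : p + u • ((1 + t₀) • (q - p)) = p + (u * (1 + t₀)) • (q - p) := by module
    rw [key]
    by_cases hc : u * (1 + t₀) ≤ 1
    · have hmem : p + (u * (1 + t₀)) • (q - p) ∈ segment ℝ p q := by
        rw [segment_eq_image']
        exact ⟨u * (1 + t₀), ⟨by positivity, hc⟩, rfl⟩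
      exact hseg hmem
    · push_neg at hc
      have heq : p + (u * (1 + t₀)) • (q - p) = q + (u * (1 + t₀) - 1) • (q - p) := by
        module
      rw [heq]
      exact hbefore _ (by linarith) (by nlinarith)
  have hxΩ : p + s • (funkB I p q - p) ∉ closure I := hΩ s hs (hst.trans ht)
  have hyΩ : p + t • (funkB I p q - p) ∉ closure I := hΩ t (hs.trans hst.le) ht
  set x := p + s • (funkB I p q - p) with hxdef
  set y := p + t • (funkB I p q - p) with hydef
  have hbp : funkB I p q ≠ p := fun h => hp (h ▸ hbC')
  have hwne : funkB I p q - p ≠ 0 := sub_ne_zero.mpr hbp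
  have hxy : x ≠ y := by
    intro h
    rw [hxdef, hydef] at h
    have hsm : (s - t) • (funkB I p q - p) = 0 := by
      have := add_left_cancel h
      rw [sub_smul, this, sub_self]
    rcases smul_eq_zero.mp hsm with h1 | h2
    · exact (sub_ne_zero.mpr hst.ne) h1
    · exact hwne h2
  -- key parametrization
  have key : ∀ r : ℝ, y + r • (y - x) = p + (t + r * (t - s)) • (funkB I p q - p) := by
    intro r
    rw [hxdef, hydef]
    module
  have hsegxy : segment ℝ x y ⊆ Omega I := by
    intro z hz
    rw [segment_eq_image'] at hz
    obtain ⟨θ, ⟨hθ0, hθ1⟩, rfl⟩ := hz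
    show x + θ • (y - x) ∈ Omega I
    have heq : x + θ • (y - x) = p + (s + θ * (t - s)) • (funkB I p q - p) := by
      rw [hxdef, hydef]; module
    rw [heq]
    exact hΩ (s + θ * (t - s)) (by nlinarith) (by nlinarith)
  -- t' is at least t₀
  have ht'ge : t₀ ≤ t' := by
    by_contra h
    push_neg at h
    exact hbefore t' ht'pos h (subset_closure ht'I)
  have ht0pos' : (0:ℝ) < 1 + t₀ := by linarith
  have hlam : (1:ℝ) ≤ (1 + t') / (1 + t₀) := by
    rw [le_div_iff₀ ht0pos']
    linarith
  have hfl : funkLt I x y := by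
    refine ⟨hxy, hsegxy, ((1 + t') / (1 + t₀) - t) / (t - s), div_pos (by linarith) (by linarith), ?_⟩
    have c1 : t + (((1 + t') / (1 + t₀) - t) / (t - s)) * (t - s) = (1 + t') / (1 + t₀) := by
      rw [div_mul_cancel₀ _ (sub_ne_zero.mpr hst.ne')]; ring
    have c2 : ((1 + t') / (1 + t₀)) * (1 + t₀) = 1 + t' := by
      field_simp
    rw [key, c1, hw, smul_smul, c2,
      show p + (1 + t') • (q - p) = q + t' • (q - p) by module]
    exact ht'I
  -- compute funkT0 for (x, y)
  have htspos : (0:ℝ) < t - s := by linarith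
  have hr1mem : (1 - t) / (t - s) ∈ {r : ℝ | 0 < r ∧ y + r • (y - x) ∈ closure I} := by
    refine ⟨div_pos (by linarith) htspos, ?_⟩
    have c3 : t + ((1 - t) / (t - s)) * (t - s) = 1 := by field_simp; ring
    rw [key, c3, one_smul,
      show p + (funkB I p q - p) = funkB I p q by abel]
    exact hbC'
  have hT0 : funkT0 I x y = (1 - t) / (t - s) := by
    apply le_antisymm
    · exact csInf_le ⟨0, fun z hz => hz.1.le⟩ hr1mem
    · apply le_csInf ⟨_, hr1mem⟩
      intro r hr
      by_contra h
      push_neg at h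
      have hlt : r * (t - s) < 1 - t := (lt_div_iff₀ htspos).mp h
      refine hΩ (t + r * (t - s)) (by nlinarith [hr.1]) (by linarith) ?_
      rw [← key]
      exact hr.2
  have hB : funkB I x y = funkB I p q := by
    show y + funkT0 I x y • (y - x) = funkB I p q
    rw [hT0, key]
    have c3 : t + ((1 - t) / (t - s)) * (t - s) = 1 := by field_simp; ring
    rw [c3, one_smul]
    abel
  have hc : ‖funkB I p q - p‖ ≠ 0 := norm_ne_zero_iff.mpr hwne
  have hF : funkF I x y = Real.log ((1 - s) / (1 - t)) := by
    rw [funkF, if_neg hxy, hB]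
    have d1 : dist x (funkB I p q) = (1 - s) * ‖funkB I p q - p‖ := by
      rw [dist_eq_norm, hxdef,
        show p + s • (funkB I p q - p) - funkB I p q = -((1 - s) • (funkB I p q - p)) by module,
        norm_neg, norm_smul, Real.norm_eq_abs, abs_of_pos (by linarith : (0:ℝ) < 1 - s)]
    have d2 : dist y (funkB I p q) = (1 - t) * ‖funkB I p q - p‖ := by
      rw [dist_eq_norm, hydef,
        show p + t • (funkB I p q - p) - funkB I p q = -((1 - t) • (funkB I p q - p)) by module,
        norm_neg, norm_smul, Real.norm_eq_abs, abs_of_pos (by linarith : (0:ℝ) < 1 - t)]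
    rw [d1, d2, mul_div_mul_right _ _ hc]
  refine ⟨hxΩ, hyΩ, hfl, hF, ?_⟩
  rw [hF, Real.log_div (by linarith : (1:ℝ) - s ≠ 0) (by linarith : (1:ℝ) - t ≠ 0)]
  ring
end
end

section
/- Uniqueness of geodesics characterizes strict convexity: the following are equivalent. (i) For every F-geodesic σ : [0,1] → Ω, the image of σ is contained in the Euclidean segment [σ(0), σ(1)]. (ii) closure I is strictly convex (equivalently, K = frontier I contains no nondegenerate Euclidean segment). -/
open RealInnerProductSpace
open scoped Classical

noncomputable section

/-- An `F`-geodesic on a real interval `J`: it takes values in `Ω`, is (weakly)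
increasing for the timelike Funk order, and the time inequality along it is an equality. -/
def IsFGeodesic {n : ℕ} (I : Set (Euc n)) (J : Set ℝ) (σ : ℝ → Euc n) : Prop :=
  (∀ t ∈ J, σ t ∈ Omega I) ∧
  (∀ t₁ ∈ J, ∀ t₂ ∈ J, t₁ ≤ t₂ → σ t₁ = σ t₂ ∨ funkLt I (σ t₁) (σ t₂)) ∧
  (∀ t₁ ∈ J, ∀ t₂ ∈ J, ∀ t₃ ∈ J, t₁ ≤ t₂ → t₂ ≤ t₃ →
    funkF I (σ t₁) (σ t₂) + funkF I (σ t₂) (σ t₃) = funkF I (σ t₁) (σ t₃))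

section Aux

variable {n : ℕ} {I : Set (Euc n)} {p q : Euc n}

lemma aux_closure_le {f : Euc n →L[ℝ] ℝ} {c : ℝ} (hfI : ∀ x ∈ I, f x < c) :
    ∀ x ∈ closure I, f x ≤ c := fun x hx =>
  closure_minimal (fun a ha => (hfI a ha).le)
    (isClosed_le f.continuous continuous_const) hx

lemma aux_isLeast (h : funkLt I p q) :
    IsLeast {t : ℝ | 0 < t ∧ q + t • (q - p) ∈ closure I} (funkT0 I p q) := by
  obtain ⟨hne', hseg, t₁, ht₁, htI⟩ := h
  have hq : q ∈ Omega I := hseg (right_mem_segment ℝ p q)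
  obtain ⟨ε, hε, hball⟩ := Metric.isOpen_iff.mp (isClosed_closure.isOpen_compl) q hq
  have hqp : (0:ℝ) < ‖q - p‖ := by
    rw [norm_sub_pos_iff]; exact fun hh => hne' hh.symm
  set δ := ε / ‖q - p‖ with hδdef
  have hδ : 0 < δ := div_pos hε hqp
  have hlb : ∀ t ∈ {t : ℝ | 0 < t ∧ q + t • (q - p) ∈ closure I}, δ ≤ t := by
    rintro t ⟨htpos, htcl⟩
    by_contra hlt
    push_neg at hlt
    have hdist : dist (q + t • (q - p)) q < ε := by
      rw [dist_eq_norm]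
      simp only [add_sub_cancel_left]
      rw [norm_smul, Real.norm_eq_abs, abs_of_pos htpos]
      calc t * ‖q - p‖ < δ * ‖q - p‖ := by nlinarith
        _ = ε := by rw [hδdef]; field_simp
    exact (hball hdist) htcl
  have hSne : Set.Nonempty {t : ℝ | 0 < t ∧ q + t • (q - p) ∈ closure I} :=
    ⟨t₁, ht₁, subset_closure htI⟩
  have hSeq : {t : ℝ | 0 < t ∧ q + t • (q - p) ∈ closure I}
      = Set.Ici δ ∩ (fun t : ℝ => q + t • (q - p)) ⁻¹' closure I := by
    ext t
    constructor
    · intro ht; exact ⟨hlb t ht, ht.2⟩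
    · rintro ⟨h1, h2⟩; exact ⟨lt_of_lt_of_le hδ h1, h2⟩
  have hclosed : IsClosed {t : ℝ | 0 < t ∧ q + t • (q - p) ∈ closure I} := by
    rw [hSeq]
    exact isClosed_Ici.inter (IsClosed.preimage (by continuity) isClosed_closure)
  have hbdd : BddBelow {t : ℝ | 0 < t ∧ q + t • (q - p) ∈ closure I} := ⟨δ, hlb⟩
  exact ⟨hclosed.csInf_mem hSne hbdd, fun t ht => csInf_le hbdd ht⟩

lemma aux_funkB_not_mem (hop : IsOpen I) (h : funkLt I p q) : funkB I p q ∉ I := by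
  intro hmem
  have hL := aux_isLeast h
  have ht₀ : 0 < funkT0 I p q := hL.1.1
  have hopen : IsOpen ((fun t : ℝ => q + t • (q - p)) ⁻¹' I) :=
    hop.preimage (by continuity)
  have hmem' : funkT0 I p q ∈ (fun t : ℝ => q + t • (q - p)) ⁻¹' I := hmem
  obtain ⟨r, hr, hball⟩ := Metric.isOpen_iff.mp hopen _ hmem'
  set s := min (r / 2) (funkT0 I p q / 2) with hs
  have hspos : 0 < s := lt_min (by linarith) (by linarith)
  have h1 : funkT0 I p q - s ∈ Metric.ball (funkT0 I p q) r := by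
    rw [Metric.mem_ball, Real.dist_eq]
    have : |funkT0 I p q - s - funkT0 I p q| = s := by
      rw [show funkT0 I p q - s - funkT0 I p q = -s by ring, abs_neg, abs_of_pos hspos]
    rw [this]
    exact lt_of_le_of_lt (min_le_left _ _) (by linarith)
  have h2 : 0 < funkT0 I p q - s :=
    by have := min_le_right (r / 2) (funkT0 I p q / 2); linarith
  have h3 : funkT0 I p q ≤ funkT0 I p q - s :=
    hL.2 ⟨h2, subset_closure (hball h1)⟩
  linarith

lemma aux_fB (f : Euc n →L[ℝ] ℝ) :
    f (funkB I p q) = f q + funkT0 I p q * (f q - f p) := by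
  simp only [funkB, map_add, map_smul, map_sub, smul_eq_mul]

lemma aux_funkF_eq (h : funkLt I p q) :
    funkF I p q = Real.log ((1 + funkT0 I p q) / funkT0 I p q) := by
  have hL := aux_isLeast h
  have ht₀ : 0 < funkT0 I p q := hL.1.1
  have hne' := h.1
  rw [funkF, if_neg hne']
  have h1 : p - funkB I p q = (-(1 + funkT0 I p q)) • (q - p) := by
    rw [funkB]; module
  have h2 : q - funkB I p q = (-(funkT0 I p q)) • (q - p) := by
    rw [funkB]; module
  have hqp : (0:ℝ) < ‖q - p‖ := by
    rw [norm_sub_pos_iff]; exact fun hh => hne' hh.symm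
  rw [dist_eq_norm, dist_eq_norm, h1, h2, norm_smul, norm_smul,
    Real.norm_eq_abs, Real.norm_eq_abs, abs_neg, abs_neg, abs_of_pos ht₀,
    abs_of_pos (show (0:ℝ) < 1 + funkT0 I p q by linarith)]
  congr 1
  rw [mul_div_mul_right _ _ (ne_of_gt hqp)]

lemma aux_funkF_pos (h : funkLt I p q) : 0 < funkF I p q := by
  rw [aux_funkF_eq h]
  have ht₀ := (aux_isLeast h).1.1
  apply Real.log_pos
  rw [lt_div_iff₀ ht₀]; linarith

lemma aux_exp_funkF (h : funkLt I p q) :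
    Real.exp (funkF I p q) = (1 + funkT0 I p q) / funkT0 I p q := by
  have ht₀ := (aux_isLeast h).1.1
  rw [aux_funkF_eq h, Real.exp_log (div_pos (by linarith) ht₀)]

lemma aux_unique (hsc : StrictConvex ℝ (closure I)) {f : Euc n →L[ℝ] ℝ} {c : ℝ}
    (hle : ∀ x ∈ closure I, f x ≤ c) {w : Euc n} (hwlt : f w < c)
    {z₁ z₂ : Euc n} (hz₁ : z₁ ∈ closure I) (hfz₁ : f z₁ = c)
    (hz₂ : z₂ ∈ closure I) (hfz₂ : f z₂ = c) : z₁ = z₂ := by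
  by_contra hne'
  have hmid : (1/2 : ℝ) • z₁ + (1/2 : ℝ) • z₂ ∈ interior (closure I) :=
    hsc hz₁ hz₂ hne' (by norm_num) (by norm_num) (by norm_num)
  obtain ⟨ε, hε, hball⟩ := Metric.isOpen_iff.mp isOpen_interior _ hmid
  set v := z₁ - w with hv
  have hfv : 0 < f v := by
    rw [hv, map_sub, hfz₁]; linarith
  have hvne : v ≠ 0 := fun h0 => by rw [h0, map_zero] at hfv; linarith
  have hvnorm : 0 < ‖v‖ := norm_pos_iff.mpr hvne
  set pt := (1/2 : ℝ) • z₁ + (1/2 : ℝ) • z₂ + (ε / (2 * ‖v‖)) • v with hpt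
  have hptball : pt ∈ Metric.ball ((1/2 : ℝ) • z₁ + (1/2 : ℝ) • z₂) ε := by
    rw [Metric.mem_ball, dist_eq_norm, hpt]
    rw [show (1/2 : ℝ) • z₁ + (1/2 : ℝ) • z₂ + (ε / (2 * ‖v‖)) • v
        - ((1/2 : ℝ) • z₁ + (1/2 : ℝ) • z₂) = (ε / (2 * ‖v‖)) • v by abel]
    have key : ‖(ε / (2 * ‖v‖)) • v‖ = ε / 2 := by
      rw [norm_smul, Real.norm_eq_abs, abs_of_pos (div_pos hε (by positivity))]
      field_simp
    rw [key]; linarith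
  have hptcl : pt ∈ closure I := interior_subset (hball hptball)
  have h1 : f pt ≤ c := hle pt hptcl
  have h2 : f pt = c + (ε / (2 * ‖v‖)) * f v := by
    rw [hpt]
    simp only [map_add, map_smul, smul_eq_mul, hfz₁, hfz₂]
    ring
  have h3 : 0 < (ε / (2 * ‖v‖)) * f v :=
    mul_pos (div_pos hε (by positivity)) hfv
  linarith

end Aux

section Back
variable {n : ℕ} {I : Set (Euc n)}

lemma aux_backward (hne : I.Nonempty) (hop : IsOpen I) (hconv : Convex ℝ I)
    (hsc : StrictConvex ℝ (closure I)) :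
    ∀ σ : ℝ → Euc n, IsFGeodesic I (Set.Icc 0 1) σ →
      ∀ t ∈ Set.Icc (0:ℝ) 1, σ t ∈ segment ℝ (σ 0) (σ 1) := by
  intro σ hσ t ht
  obtain ⟨hΩ, hmono, hadd⟩ := hσ
  have h0 : (0:ℝ) ∈ Set.Icc (0:ℝ) 1 := by norm_num
  have h1 : (1:ℝ) ∈ Set.Icc (0:ℝ) 1 := by norm_num
  have hadd' := hadd 0 h0 t ht 1 h1 ht.1 ht.2
  rcases hmono 0 h0 t ht ht.1 with h0t | h0t
  · rw [← h0t]; exact left_mem_segment ℝ _ _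
  rcases hmono t ht 1 h1 ht.2 with ht1 | ht1
  · rw [ht1]; exact right_mem_segment ℝ _ _
  rcases hmono 0 h0 1 h1 zero_le_one with h01 | h01
  · exfalso
    have hF1 := aux_funkF_pos h0t
    have hF2 := aux_funkF_pos ht1
    have hz : funkF I (σ 0) (σ 1) = 0 := by rw [← h01, funkF, if_pos rfl]
    rw [hz] at hadd'
    linarith
  -- main case
  have ht₁ : 0 < funkT0 I (σ 0) (σ t) := (aux_isLeast h0t).1.1
  have ht₂ : 0 < funkT0 I (σ t) (σ 1) := (aux_isLeast ht1).1.1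
  have ht₃ : 0 < funkT0 I (σ 0) (σ 1) := (aux_isLeast h01).1.1
  have hb₁cl : funkB I (σ 0) (σ t) ∈ closure I := (aux_isLeast h0t).1.2
  have hb₂cl : funkB I (σ t) (σ 1) ∈ closure I := (aux_isLeast ht1).1.2
  have hb₃cl : funkB I (σ 0) (σ 1) ∈ closure I := (aux_isLeast h01).1.2
  have hb₃I : funkB I (σ 0) (σ 1) ∉ I := aux_funkB_not_mem hop h01
  obtain ⟨f, hf⟩ := geometric_hahn_banach_open_point hconv hop hb₃I
  set c := f (funkB I (σ 0) (σ 1)) with hc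
  have hle : ∀ x ∈ closure I, f x ≤ c := aux_closure_le hf
  obtain ⟨w, hw⟩ := hne
  have hwlt : f w < c := hf w hw
  -- identities
  have I1 : f (funkB I (σ 0) (σ t)) = f (σ t) + funkT0 I (σ 0) (σ t) * (f (σ t) - f (σ 0)) :=
    aux_fB f
  have I2 : f (funkB I (σ t) (σ 1)) = f (σ 1) + funkT0 I (σ t) (σ 1) * (f (σ 1) - f (σ t)) :=
    aux_fB f
  have I3 : c = f (σ 1) + funkT0 I (σ 0) (σ 1) * (f (σ 1) - f (σ 0)) := by
    rw [hc]; exact aux_fB f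
  have hR : Real.exp (funkF I (σ 0) (σ t)) * Real.exp (funkF I (σ t) (σ 1))
      = Real.exp (funkF I (σ 0) (σ 1)) := by
    rw [← Real.exp_add, hadd']
  rw [aux_exp_funkF h0t, aux_exp_funkF ht1, aux_exp_funkF h01] at hR
  have hR' : (1 + funkT0 I (σ 0) (σ t)) * (1 + funkT0 I (σ t) (σ 1)) * funkT0 I (σ 0) (σ 1)
      = (1 + funkT0 I (σ 0) (σ 1)) * (funkT0 I (σ 0) (σ t) * funkT0 I (σ t) (σ 1)) := by
    field_simp at hR
    linarith
  set t₁ := funkT0 I (σ 0) (σ t)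
  set t₂ := funkT0 I (σ t) (σ 1)
  set t₃ := funkT0 I (σ 0) (σ 1)
  set β₁ := f (funkB I (σ 0) (σ t)) with hβ₁
  set β₂ := f (funkB I (σ t) (σ 1)) with hβ₂
  have hβ₁le : β₁ ≤ c := hle _ hb₁cl
  have hβ₂le : β₂ ≤ c := hle _ hb₂cl
  -- combine
  have e1 : t₁ * t₂ * (f (σ 0) - c)
      = (1 + t₁) * ((f (σ 1) - c) * (1 + t₂) - (β₂ - c)) - t₂ * (β₁ - c) := by
    linear_combination t₂ * I1 + (1 + t₁) * I2
  have e2 : t₁ * t₂ * t₃ * (f (σ 0) - c)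
      = (f (σ 1) - c) * (1 + t₁) * (1 + t₂) * t₃ := by
    linear_combination t₁ * t₂ * I3 - (f (σ 1) - c) * hR'
  have e3 : t₃ * (1 + t₁) * (c - β₂) + t₃ * t₂ * (c - β₁) = 0 := by
    linear_combination e2 - t₃ * e1
  have hA : 0 ≤ t₃ * (1 + t₁) * (c - β₂) :=
    mul_nonneg (mul_nonneg ht₃.le (by linarith)) (by linarith)
  have hB : 0 ≤ t₃ * t₂ * (c - β₁) :=
    mul_nonneg (mul_nonneg ht₃.le ht₂.le) (by linarith)
  have hA0 : t₃ * (1 + t₁) * (c - β₂) = 0 := by linarith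
  have hB0 : t₃ * t₂ * (c - β₁) = 0 := by linarith
  have hβ₂c : β₂ = c := by
    rcases mul_eq_zero.mp hA0 with h | h
    · exfalso; nlinarith
    · linarith
  have hβ₁c : β₁ = c := by
    rcases mul_eq_zero.mp hB0 with h | h
    · exfalso; nlinarith
    · linarith
  -- uniqueness of supporting point
  have hbb1 : funkB I (σ 0) (σ t) = funkB I (σ 0) (σ 1) :=
    aux_unique hsc hle hwlt hb₁cl hβ₁c hb₃cl hc.symm
  have hbb2 : funkB I (σ t) (σ 1) = funkB I (σ 0) (σ 1) :=
    aux_unique hsc hle hwlt hb₂cl hβ₂c hb₃cl hc.symm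
  -- geometry
  set b := funkB I (σ 0) (σ 1) with hbdef
  have hBm : b = σ t + t₁ • (σ t - σ 0) := by rw [← hbb1]; rfl
  have hBr : b = σ 1 + t₂ • (σ 1 - σ t) := by rw [← hbb2]; rfl
  have h1t₁ : (0:ℝ) < 1 + t₁ := by linarith
  have h1t₂ : (0:ℝ) < 1 + t₂ := by linarith
  set lam := 1 / (1 + t₁) with hlam
  set mu := 1 / (1 + t₂) with hmu
  have hlam0 : 0 < lam := by positivity
  have hlam1 : lam ≤ 1 := by rw [hlam]; rw [div_le_one h1t₁]; linarith
  have hmu0 : 0 < mu := by positivity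
  have hv1 : b - σ 0 = (1 + t₁) • (σ t - σ 0) := by rw [hBm]; module
  have hmp : σ t - σ 0 = lam • (b - σ 0) := by
    rw [hv1, smul_smul, hlam]
    rw [show 1 / (1 + t₁) * (1 + t₁) = 1 by field_simp, one_smul]
  have hbm : b - σ t = (1 - lam) • (b - σ 0) := by
    rw [show b - σ t = (b - σ 0) - (σ t - σ 0) by abel, hmp]; module
  have hrm : σ 1 - σ t = (mu * (1 - lam)) • (b - σ 0) := by
    have hv2 : b - σ t = (1 + t₂) • (σ 1 - σ t) := by rw [hBr]; module
    rw [← smul_smul]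
    rw [← hbm, hv2, smul_smul, hmu]
    rw [show 1 / (1 + t₂) * (1 + t₂) = 1 by field_simp, one_smul]
  have hrp : σ 1 - σ 0 = (lam + mu * (1 - lam)) • (b - σ 0) := by
    rw [show σ 1 - σ 0 = (σ 1 - σ t) + (σ t - σ 0) by abel, hrm, hmp]; module
  set lam3 := lam + mu * (1 - lam) with hlam3
  have hlam30 : 0 < lam3 := by
    have : 0 ≤ mu * (1 - lam) := mul_nonneg hmu0.le (by linarith)
    rw [hlam3]; linarith
  set θ := lam / lam3 with hθ
  have hθ0 : 0 ≤ θ := div_nonneg hlam0.le hlam30.le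
  have hθ1 : θ ≤ 1 := by
    rw [hθ, div_le_one hlam30, hlam3]
    have : 0 ≤ mu * (1 - lam) := mul_nonneg hmu0.le (by linarith)
    linarith
  have hmθ : σ t = σ 0 + θ • (σ 1 - σ 0) := by
    rw [hrp, smul_smul, hθ]
    rw [show lam / lam3 * lam3 = lam by field_simp, ← hmp]
    abel
  rw [segment_eq_image']
  exact ⟨θ, ⟨hθ0, hθ1⟩, hmθ.symm⟩

end Back

section Fwd
variable {n : ℕ} {I : Set (Euc n)}

set_option maxHeartbeats 2000000 in
lemma aux_construct (hop : IsOpen I) (hconv : Convex ℝ I)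
    {f : Euc n →L[ℝ] ℝ} {c : ℝ} {a b w : Euc n}
    (hfI : ∀ x ∈ I, f x < c) (ha : a ∈ closure I) (hb : b ∈ closure I) (hab : a ≠ b)
    (hfa : f a = c) (hfb : f b = c) (hw : w ∈ I) :
    ∃ σ : ℝ → Euc n, IsFGeodesic I (Set.Icc 0 1) σ ∧
      σ (1/2) ∉ segment ℝ (σ 0) (σ 1) := by
  have hh : 0 < c - f w := sub_pos.mpr (hfI w hw)
  set h := c - f w with hhdef
  set d := b - a with hd
  set m := (1/2 : ℝ) • (a + b) with hm
  set e := h⁻¹ • (m - w) with he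
  set η : ℝ → ℝ := fun t => Real.exp (-t) with hη
  have hηpos : ∀ t, 0 < η t := fun t => Real.exp_pos _
  have hηlt : ∀ {s t : ℝ}, s < t → η t < η s := fun {s t} hst =>
    Real.exp_lt_exp.mpr (by linarith)
  have hηle1 : ∀ t, 0 ≤ t → η t ≤ 1 := fun t ht =>
    Real.exp_le_one_iff.mpr (by linarith)
  have hηlog : ∀ s t : ℝ, Real.log (η s / η t) = t - s := by
    intro s t
    rw [hη]
    simp only
    rw [← Real.exp_sub, show -s - -t = t - s by ring, Real.log_exp]
  have hη0 : η 0 = 1 := by rw [hη]; simp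
  have hηsq : η 1 = η (1/2) ^ 2 := by
    rw [hη]
    simp only
    rw [sq, ← Real.exp_add]
    norm_num
  set σ : ℝ → Euc n := fun t => m + (η t ^ 2 / 8) • d + η t • e with hσ
  clear_value h d m e η σ
  have hcl_le : ∀ x ∈ closure I, f x ≤ c := aux_closure_le hfI
  have hfd : f d = 0 := by rw [hd, map_sub, hfa, hfb, sub_self]
  have hfm : f m = c := by
    rw [hm, map_smul, map_add, hfa, hfb, smul_eq_mul]; ring
  have hfmw : f (m - w) = h := by rw [map_sub, hfm, hhdef]
  have hfe : f e = 1 := by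
    rw [he, map_smul, hfmw, smul_eq_mul, inv_mul_cancel₀ (ne_of_gt hh)]
  have hfσ : ∀ t, f (σ t) = c + η t := by
    intro t
    simp only [hσ, map_add, map_smul, hfd, hfe, hfm, smul_eq_mul]
    ring
  have hsmul_e : ∀ r : ℝ, (r * h) • e = r • (m - w) := by
    intro r
    rw [he, smul_smul, mul_assoc, mul_inv_cancel₀ (ne_of_gt hh), mul_one]
  have hmem_cl : ∀ ξ : ℝ, |ξ| ≤ 1/2 → m + ξ • d ∈ closure I := by
    intro ξ hξ
    obtain ⟨hξ1, hξ2⟩ := abs_le.mp hξ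
    have h1 : m + ξ • d = (1/2 - ξ) • a + (1/2 + ξ) • b := by
      rw [hm, hd]; module
    rw [h1]
    exact hconv.closure ha hb (by linarith) (by linarith) (by ring)
  have hmemI : ∀ s : ℝ, 0 < s → s ≤ 1 → ∀ x ∈ closure I, s • w + (1 - s) • x ∈ I := by
    intro s hs hs1 x hx
    have := hconv.combo_interior_closure_mem_interior (a := s) (b := 1 - s)
      (by rwa [hop.interior_eq]) hx hs (by linarith) (by ring)
    rwa [hop.interior_eq] at this
  -- key computation for each ordered pair
  have key : ∀ t1 t2 : ℝ, 0 ≤ t1 → t1 < t2 → t2 ≤ 1 →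
      funkLt I (σ t1) (σ t2) ∧ funkF I (σ t1) (σ t2) = t2 - t1 := by
    intro t1 t2 ht1 h12 ht2
    have hη12 : η t2 < η t1 := hηlt h12
    have hη2pos : 0 < η t2 := hηpos t2
    have hη1pos : 0 < η t1 := hηpos t1
    have hη1le : η t1 ≤ 1 := hηle1 t1 ht1
    have hη2le : η t2 ≤ 1 := hηle1 t2 (by linarith)
    have hδη : 0 < η t1 - η t2 := by linarith
    have hray : ∀ u : ℝ, σ t2 + u • (σ t2 - σ t1)
        = m + (η t2 ^ 2 / 8 + u * (η t2 ^ 2 / 8 - η t1 ^ 2 / 8)) • d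
          + (η t2 + u * (η t2 - η t1)) • e := by
      intro u
      simp only [hσ]
      module
    have hpq : σ t1 ≠ σ t2 := by
      intro hEq
      have h' := congrArg f hEq
      rw [hfσ, hfσ] at h'
      linarith
    have hseg : segment ℝ (σ t1) (σ t2) ⊆ Omega I := by
      rintro z ⟨u, v, hu, hv, huv, rfl⟩
      simp only [Omega, Set.mem_compl_iff]
      intro hzcl
      have hfz : f (u • σ t1 + v • σ t2) = c + (u * η t1 + v * η t2) := by
        rw [map_add, map_smul, map_smul, hfσ, hfσ, smul_eq_mul, smul_eq_mul]
        linear_combination c * huv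
      have hpos : 0 < u * η t1 + v * η t2 := by nlinarith
      have := hcl_le _ hzcl
      rw [hfz] at this
      linarith
    -- the crossing parameter
    set ts := η t2 / (η t1 - η t2) with hts
    clear_value ts
    have htspos : 0 < ts := by rw [hts]; exact div_pos hη2pos hδη
    have hc_e0 : η t2 + ts * (η t2 - η t1) = 0 := by
      rw [hts]; field_simp; ring
    have hc_d0 : η t2 ^ 2 / 8 + ts * (η t2 ^ 2 / 8 - η t1 ^ 2 / 8) = -(η t1 * η t2 / 8) := by
      rw [hts]; field_simp; ring
    have hxstar : σ t2 + ts • (σ t2 - σ t1) = m + (-(η t1 * η t2 / 8)) • d := by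
      rw [hray ts, hc_e0, hc_d0, zero_smul, add_zero]
    have hxstar_cl : m + (-(η t1 * η t2 / 8)) • d ∈ closure I := by
      apply hmem_cl
      rw [abs_neg, abs_of_nonneg (div_nonneg (mul_nonneg hη1pos.le hη2pos.le) (by norm_num))]
      nlinarith [hη1le, hη2le, hη1pos, hη2pos]
    -- entering point
    set s0 := 1 / (2 * (1 + h)) with hs0def
    clear_value s0
    have hs0 : 0 < s0 := by
      rw [hs0def]; exact div_pos one_pos (by linarith)
    have hs0h : s0 * h ≤ 1 / 2 := by
      rw [hs0def, div_mul_eq_mul_div, one_mul, div_le_iff₀ (by linarith : (0:ℝ) < 2 * (1 + h))]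
      linarith
    have hs0le : s0 ≤ 1 / 2 := by
      rw [hs0def, div_le_div_iff₀ (by linarith : (0:ℝ) < 2 * (1 + h)) (by norm_num)]
      linarith
    set u0 := (η t2 + s0 * h) / (η t1 - η t2) with hu0def
    clear_value u0
    have hu0 : 0 < u0 := by
      rw [hu0def]; exact div_pos (add_pos hη2pos (mul_pos hs0 hh)) hδη
    set ξs := η t1 * η t2 / 8 + s0 * h * (η t1 + η t2) / 8 with hξs
    clear_value ξs
    have hc_e1 : η t2 + u0 * (η t2 - η t1) = (-s0) * h := by
      rw [hu0def]; field_simp; ring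
    have hc_d1 : η t2 ^ 2 / 8 + u0 * (η t2 ^ 2 / 8 - η t1 ^ 2 / 8) = -ξs := by
      rw [hu0def, hξs]; field_simp; ring
    have hξs_nonneg : 0 ≤ ξs := by
      rw [hξs]
      have h1 : (0:ℝ) ≤ η t1 * η t2 / 8 :=
        div_nonneg (mul_nonneg hη1pos.le hη2pos.le) (by norm_num)
      have h2 : (0:ℝ) ≤ s0 * h * (η t1 + η t2) / 8 :=
        div_nonneg (mul_nonneg (mul_nonneg hs0.le hh.le) (by linarith)) (by norm_num)
      linarith
    have hξs_le : ξs ≤ 1 / 4 := by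
      rw [hξs]
      nlinarith [hη1le, hη2le, hη1pos, hη2pos, hs0h, hs0, hh]
    have h1s0 : (0:ℝ) < 1 - s0 := by linarith
    have hbound : |(-(ξs / (1 - s0)))| ≤ 1 / 2 := by
      rw [abs_neg, abs_of_nonneg (div_nonneg hξs_nonneg h1s0.le), div_le_iff₀ h1s0]
      nlinarith
    have hpt : σ t2 + u0 • (σ t2 - σ t1)
        = s0 • w + (1 - s0) • (m + (-(ξs / (1 - s0))) • d) := by
      rw [hray u0, hc_e1, hc_d1, hsmul_e (-s0)]
      match_scalars
      · ring
      · field_simp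
      · ring
    have hptI : σ t2 + u0 • (σ t2 - σ t1) ∈ I := by
      rw [hpt]
      exact hmemI s0 hs0 (by linarith) _ (hmem_cl _ hbound)
    have hlt : funkLt I (σ t1) (σ t2) := ⟨hpq, hseg, u0, hu0, hptI⟩
    have hT0 : funkT0 I (σ t1) (σ t2) = ts := by
      apply le_antisymm
      · exact csInf_le ⟨0, fun r hr => hr.1.le⟩
          ⟨htspos, by rw [hxstar]; exact hxstar_cl⟩
      · refine le_csInf ⟨ts, htspos, by rw [hxstar]; exact hxstar_cl⟩ ?_
        rintro r ⟨hrpos, hrcl⟩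
        have hfr : f (σ t2 + r • (σ t2 - σ t1)) = c + (η t2 + r * (η t2 - η t1)) := by
          rw [hray r, map_add, map_add, map_smul, map_smul, hfm, hfd, hfe,
            smul_eq_mul, smul_eq_mul]
          ring
        have hler := hcl_le _ hrcl
        rw [hfr] at hler
        rw [hts, div_le_iff₀ hδη]
        nlinarith
    have hB : funkB I (σ t1) (σ t2) = m + (-(η t1 * η t2 / 8)) • d := by
      rw [funkB, hT0, hxstar]
    set v := ((η t1 + η t2) / 8) • d + e with hvdef
    clear_value v
    have hfv : f v = 1 := by
      rw [hvdef, map_add, map_smul, hfd, hfe, smul_eq_mul]; ring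
    have hvne : v ≠ 0 := fun h0 => by rw [h0, map_zero] at hfv; norm_num at hfv
    have hvnorm : 0 < ‖v‖ := norm_pos_iff.mpr hvne
    have hpv : σ t1 - funkB I (σ t1) (σ t2) = η t1 • v := by
      rw [hB, hvdef]; simp only [hσ]; module
    have hqv : σ t2 - funkB I (σ t1) (σ t2) = η t2 • v := by
      rw [hB, hvdef]; simp only [hσ]; module
    have hF : funkF I (σ t1) (σ t2) = t2 - t1 := by
      rw [funkF, if_neg hpq, dist_eq_norm, dist_eq_norm, hpv, hqv, norm_smul, norm_smul,
        Real.norm_eq_abs, Real.norm_eq_abs, abs_of_pos hη1pos, abs_of_pos hη2pos,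
        mul_div_mul_right _ _ (ne_of_gt hvnorm)]
      exact hηlog t1 t2
    exact ⟨hlt, hF⟩
  have hFall : ∀ t1 t2 : ℝ, t1 ∈ Set.Icc (0:ℝ) 1 → t2 ∈ Set.Icc (0:ℝ) 1 → t1 ≤ t2 →
      funkF I (σ t1) (σ t2) = t2 - t1 := by
    intro t1 t2 h1 h2 h12
    rcases eq_or_lt_of_le h12 with rfl | hlt'
    · rw [funkF, if_pos rfl]; ring
    · exact (key t1 t2 h1.1 hlt' h2.2).2
  refine ⟨σ, ⟨?_, ?_, ?_⟩, ?_⟩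
  · intro t _
    simp only [Omega, Set.mem_compl_iff]
    intro hcl
    have := hcl_le _ hcl
    rw [hfσ] at this
    linarith [hηpos t]
  · intro t1 h1 t2 h2 h12
    rcases eq_or_lt_of_le h12 with rfl | hlt'
    · exact Or.inl rfl
    · exact Or.inr (key t1 t2 h1.1 hlt' h2.2).1
  · intro t1 h1 t2 h2 t3 h3 h12 h23
    rw [hFall t1 t2 h1 h2 h12, hFall t2 t3 h2 h3 h23, hFall t1 t3 h1 h3 (le_trans h12 h23)]
    ring
  · rintro ⟨u, v', hu, hv, huv, hEq⟩
    set x := η (1/2) with hx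
    have hx0 : 0 < x := hηpos _
    have hx1 : x < 1 := by
      have h' : η (1/2) < η 0 := hηlt (by norm_num)
      rw [hη0] at h'
      rw [hx]; exact h'
    have hη1v : η 1 = x ^ 2 := hηsq
    clear_value x
    have hf_eq := congrArg f hEq
    rw [map_add, map_smul, map_smul, hfσ, hfσ, hfσ, smul_eq_mul, smul_eq_mul,
      hη0, ← hx, hη1v] at hf_eq
    have hA : u + v' * x ^ 2 = x := by linear_combination hf_eq - c * huv
    set g : Euc n →L[ℝ] ℝ := innerSL ℝ d with hg
    have hgd : g d = ‖d‖ ^ 2 := by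
      rw [hg, innerSL_apply_apply]; exact real_inner_self_eq_norm_sq d
    have hdne : d ≠ 0 := by rw [hd]; exact sub_ne_zero.mpr (Ne.symm hab)
    have hdnorm : (0:ℝ) < ‖d‖ ^ 2 := pow_pos (norm_pos_iff.mpr hdne) 2
    have hgσ : ∀ t, g (σ t) = g m + η t ^ 2 / 8 * ‖d‖ ^ 2 + η t * g e := by
      intro t
      simp only [hσ, map_add, map_smul, smul_eq_mul, hgd]
      try ring
    have hg_eq := congrArg g hEq
    rw [map_add, map_smul, map_smul, hgσ, hgσ, hgσ, smul_eq_mul, smul_eq_mul,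
      hη0, ← hx, hη1v] at hg_eq
    have hBq : u + v' * x ^ 4 = x ^ 2 := by
      have expand : (u + v' * x ^ 4) * (‖d‖ ^ 2 / 8) = x ^ 2 * (‖d‖ ^ 2 / 8) := by
        linear_combination hg_eq - g e * hA - g m * huv
      have h8 : (‖d‖ ^ 2 / 8 : ℝ) ≠ 0 := ne_of_gt (div_pos hdnorm (by norm_num))
      exact mul_right_cancel₀ h8 expand
    have hxx : x * (x - 1) ^ 2 = 0 := by
      linear_combination x ^ 2 * huv - (1 + x ^ 2) * hA + hBq
    have hx1' : x - 1 ≠ 0 := by intro h'; rw [sub_eq_zero] at h'; linarith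
    have hsqpos : (0:ℝ) < (x - 1) ^ 2 :=
      (sq_nonneg (x - 1)).lt_of_ne (Ne.symm (pow_ne_zero 2 hx1'))
    nlinarith

end Fwd

/-- every `F`-geodesic `σ : [0,1] → Ω` has image in the Euclidean segment
`[σ 0, σ 1]` if and only if `closure I` is strictly convex. -/
theorem fGeodesic_unique_iff_strictConvex {n : ℕ} (hn : 1 ≤ n) (I : Set (Euc n))
    (hne : I.Nonempty) (hop : IsOpen I) (hconv : Convex ℝ I)
    (hcl : closure I ≠ Set.univ) :
    (∀ σ : ℝ → Euc n, IsFGeodesic I (Set.Icc 0 1) σ →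
      ∀ t ∈ Set.Icc (0:ℝ) 1, σ t ∈ segment ℝ (σ 0) (σ 1)) ↔
    StrictConvex ℝ (closure I) := by
  constructor
  · intro hgeo
    by_contra hsc
    simp only [StrictConvex, Set.Pairwise, not_forall] at hsc
    obtain ⟨p, hp, q, hq, hpq, α, β, hα, hβ, hαβ, hz⟩ := hsc
    have hzcl : α • p + β • q ∈ closure I := hconv.closure hp hq hα.le hβ.le hαβ
    have hznotI : α • p + β • q ∉ I := by
      intro hmem
      exact hz (interior_mono subset_closure (hop.interior_eq.symm ▸ hmem))
    obtain ⟨f, hf⟩ := geometric_hahn_banach_open_point hconv hop hznotI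
    set c := f (α • p + β • q) with hc
    have hple : f p ≤ c := aux_closure_le hf p hp
    have hqle : f q ≤ c := aux_closure_le hf q hq
    have hsum : α * f p + β * f q = c := by
      rw [hc, map_add, map_smul, map_smul, smul_eq_mul, smul_eq_mul]
    have h3 : α * c + β * c = c := by linear_combination c * hαβ
    have hfp : f p = c := by
      by_contra hne'
      have hlt' : f p < c := lt_of_le_of_ne hple hne'
      have h1 : α * f p < α * c := mul_lt_mul_of_pos_left hlt' hα
      have h2 : β * f q ≤ β * c := mul_le_mul_of_nonneg_left hqle hβ.le
      linarith
    have hfq : f q = c := by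
      by_contra hne'
      have hlt' : f q < c := lt_of_le_of_ne hqle hne'
      have h1 : β * f q < β * c := mul_lt_mul_of_pos_left hlt' hβ
      have h2 : α * f p ≤ α * c := mul_le_mul_of_nonneg_left hple hα.le
      linarith
    obtain ⟨w, hw⟩ := hne
    obtain ⟨σ, hσgeo, hσnot⟩ := aux_construct hop hconv hf hp hq hpq hfp hfq hw
    exact hσnot (hgeo σ hσgeo (1/2) (by norm_num))
  · intro hsc
    exact aux_backward hne hop hconv hsc
end
end

section
/- Future spheres are homothetic images of the visible part of K: for p ∈ Ω and r > 0, let S(p,r) = {q ∈ Ω : p < q ∧ F(p,q) = r} (the future sphere of center p and radius r) and let B(p) = {b(p,q) : q ∈ Ω, p < q} ⊆ K (the part of K visible from p). Then S(p,r) is exactly the image of B(p) under the homothety x ↦ p + (1 − Real.exp (−r)) • (x − p) of center p and ratio 1 − e^{−r}. -/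
open RealInnerProductSpace
open scoped Classical

noncomputable section

lemma funkT0_lemma {n : ℕ} {I : Set (Euc n)} {p q : Euc n}
    (h : funkLt I p q) :
    0 < funkT0 I p q ∧ q + funkT0 I p q • (q - p) ∈ closure I ∧
      ∀ t : ℝ, 0 ≤ t → t < funkT0 I p q → q + t • (q - p) ∉ closure I := by
  obtain ⟨hne, hseg, t₁, ht₁, ht₁I⟩ := h
  have hq : q ∉ closure I := hseg (right_mem_segment ℝ p q)
  have hcont : Continuous fun t : ℝ => q + t • (q - p) :=
    continuous_const.add (continuous_id.smul continuous_const)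
  set S : Set ℝ := {t : ℝ | 0 < t ∧ q + t • (q - p) ∈ closure I} with hS
  have hSne : S.Nonempty := ⟨t₁, ht₁, subset_closure ht₁I⟩
  have hSbdd : BddBelow S := ⟨0, fun t ht => le_of_lt ht.1⟩
  have hopen : IsOpen {t : ℝ | q + t • (q - p) ∉ closure I} :=
    ((isClosed_closure (s := I)).preimage hcont).isOpen_compl
  have h0 : (0:ℝ) ∈ {t : ℝ | q + t • (q - p) ∉ closure I} := by simpa using hq
  obtain ⟨ε, hε, hball⟩ := Metric.isOpen_iff.mp hopen 0 h0
  have hlb : ∀ t ∈ S, ε ≤ t := by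
    intro t ht
    by_contra hlt
    push_neg at hlt
    have hb : t ∈ Metric.ball (0:ℝ) ε := by
      simp only [Metric.mem_ball, Real.dist_eq, sub_zero, abs_of_pos ht.1]
      exact hlt
    exact (hball hb) ht.2
  have ht0pos : 0 < funkT0 I p q := lt_of_lt_of_le hε (le_csInf hSne hlb)
  have hmem : q + funkT0 I p q • (q - p) ∈ closure I := by
    have hC : IsClosed {t : ℝ | q + t • (q - p) ∈ closure I} :=
      isClosed_closure.preimage hcont
    exact (closure_minimal (fun t ht => ht.2) hC) (csInf_mem_closure hSne hSbdd)
  refine ⟨ht0pos, hmem, fun t ht0 htlt hmem' => ?_⟩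
  rcases eq_or_lt_of_le ht0 with h0' | h0'
  · apply hq; simpa [← h0'] using hmem'
  · exact absurd (csInf_le hSbdd ⟨h0', hmem'⟩) (not_le.mpr htlt)

lemma funkF_of_ne {n : ℕ} (I : Set (Euc n)) {p q : Euc n} (h : p ≠ q) :
    funkF I p q = Real.log (dist p (funkB I p q) / dist q (funkB I p q)) := if_neg h

set_option maxHeartbeats 2000000 in
/-- the future sphere `S(p,r) = {q ∈ Ω | p < q ∧ F(p,q) = r}` is the image
of the part `B(p) = {b(p,q) | p < q}` of `K` visible from `p` under the homothety of
center `p` and ratio `1 − e^{−r}`. -/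
theorem futureSphere_eq_homothety_image {n : ℕ} (hn : 1 ≤ n) (I : Set (Euc n))
    (hne : I.Nonempty) (hop : IsOpen I) (hconv : Convex ℝ I)
    (hcl : closure I ≠ Set.univ)
    (p : Euc n) (hp : p ∈ Omega I) (r : ℝ) (hr : 0 < r) :
    {q | q ∈ Omega I ∧ funkLt I p q ∧ funkF I p q = r} =
      (fun x => p + (1 - Real.exp (-r)) • (x - p)) ''
        {x | ∃ q ∈ Omega I, funkLt I p q ∧ funkB I p q = x} := by
  have hexp1 : Real.exp (-r) < 1 := by
    have := Real.exp_lt_exp.mpr (show -r < 0 by linarith)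
    simpa using this
  have hexp0 : 0 < Real.exp (-r) := Real.exp_pos _
  set c := 1 - Real.exp (-r) with hcdef
  have hc0 : 0 < c := by rw [hcdef]; linarith
  have hc1 : c < 1 := by rw [hcdef]; linarith
  have h1c : 1 - c = Real.exp (-r) := by rw [hcdef]; ring
  clear_value c
  ext q
  simp only [Set.mem_setOf_eq, Set.mem_image]
  constructor
  · rintro ⟨hqΩ, hlt, hF⟩
    have hpq : p ≠ q := hlt.1
    have hv : q - p ≠ 0 := sub_ne_zero.mpr hpq.symm
    obtain ⟨ht0, hbcl, hmin⟩ := funkT0_lemma hlt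
    have hbp : funkB I p q - p = (1 + funkT0 I p q) • (q - p) := by
      simp only [funkB]; module
    have hbq : funkB I p q - q = funkT0 I p q • (q - p) := by
      simp only [funkB]; module
    have hN : (0:ℝ) < ‖q - p‖ := norm_pos_iff.mpr hv
    have hdpb : dist p (funkB I p q) = (1 + funkT0 I p q) * ‖q - p‖ := by
      rw [dist_eq_norm, ← norm_neg, neg_sub, hbp, norm_smul, Real.norm_eq_abs,
        abs_of_pos (by linarith)]
    have hdqb : dist q (funkB I p q) = funkT0 I p q * ‖q - p‖ := by
      rw [dist_eq_norm, ← norm_neg, neg_sub, hbq, norm_smul, Real.norm_eq_abs,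
        abs_of_pos ht0]
    rw [funkF_of_ne I hpq] at hF
    rw [hdpb, hdqb, mul_div_mul_right _ _ (ne_of_gt hN)] at hF
    have hx : (1 + funkT0 I p q) / funkT0 I p q = Real.exp r := by
      rw [← hF, Real.exp_log (div_pos (by linarith) ht0)]
    have ht0eq : 1 + funkT0 I p q = Real.exp r * funkT0 I p q := by
      field_simp at hx; linarith
    have h1 : Real.exp (-r) * Real.exp r = 1 := by
      rw [← Real.exp_add]; simp
    have key : c * (1 + funkT0 I p q) = 1 := by
      rw [hcdef]; nlinarith [ht0eq, h1]
    refine ⟨funkB I p q, ⟨q, hqΩ, hlt, rfl⟩, ?_⟩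
    show p + c • (funkB I p q - p) = q
    rw [hbp, smul_smul, key, one_smul]
    abel
  · rintro ⟨x, ⟨q', hq'Ω, hlt', rfl⟩, rfl⟩
    obtain ⟨hu0, hxcl0, hmin'⟩ := funkT0_lemma hlt'
    have hpq' : p ≠ q' := hlt'.1
    have hseg' := hlt'.2.1
    have hxp : funkB I p q' - p = (1 + funkT0 I p q') • (q' - p) := by
      simp only [funkB]; module
    set u := funkT0 I p q' with hu
    set x := funkB I p q' with hxdef
    have hxcl : x ∈ closure I := hxcl0
    clear_value u x
    have hxeq : x = p + (1 + u) • (q' - p) := by rw [← hxp]; abel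
    have star : ∀ s : ℝ, 0 ≤ s → s < 1 + u → p + s • (q' - p) ∉ closure I := by
      intro s hs0 hs1 hmem
      rcases le_or_gt s 1 with hs | hs
      · have hz : p + s • (q' - p) ∈ segment ℝ p q' := by
          rw [segment_eq_image']
          exact ⟨s, ⟨hs0, hs⟩, rfl⟩
        exact hseg' hz hmem
      · have heq : p + s • (q' - p) = q' + (s - 1) • (q' - p) := by module
        exact hmin' (s - 1) (by linarith) (by linarith) (by rw [← heq]; exact hmem)
    have ha0 : 0 < c * (1 + u) := mul_pos hc0 (by linarith)
    have ha1 : c * (1 + u) < 1 + u := by nlinarith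
    have key : ∀ t : ℝ, p + c • (x - p) + t • (p + c • (x - p) - p)
        = p + ((1 + t) * (c * (1 + u))) • (q' - p) := by
      intro t
      rw [show x - p = (1 + u) • (q' - p) from hxp]
      module
    have hq_eq : p + c • (x - p) = p + (c * (1 + u)) • (q' - p) := by
      rw [show x - p = (1 + u) • (q' - p) from hxp]; module
    have hqΩ : p + c • (x - p) ∈ Omega I := by
      rw [hq_eq]
      exact star _ (le_of_lt ha0) ha1
    have hvne : (c * (1 + u)) • (q' - p) ≠ 0 :=
      smul_ne_zero (ne_of_gt ha0) (sub_ne_zero.mpr hpq'.symm)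
    have hne2 : p ≠ p + c • (x - p) := by
      rw [hq_eq]
      intro h
      exact hvne (left_eq_add.mp h)
    have hsegq : segment ℝ p (p + c • (x - p)) ⊆ Omega I := by
      rw [hq_eq, segment_eq_image']
      rintro z ⟨θ, ⟨hθ0, hθ1⟩, rfl⟩
      show p + θ • (p + (c * (1 + u)) • (q' - p) - p) ∈ Omega I
      have hzz : p + θ • (p + (c * (1 + u)) • (q' - p) - p)
          = p + (θ * (c * (1 + u))) • (q' - p) := by module
      rw [hzz]
      refine star _ (mul_nonneg hθ0 (le_of_lt ha0)) ?_
      nlinarith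
    obtain ⟨t', ht'0, ht'I⟩ := hlt'.2.2
    have hyeq : q' + t' • (q' - p) = p + (1 + t') • (q' - p) := by module
    have h1t' : 1 + u ≤ 1 + t' := by
      by_contra hcon
      push_neg at hcon
      exact star (1 + t') (by linarith) hcon (by rw [← hyeq]; exact subset_closure ht'I)
    have hltq : funkLt I p (p + c • (x - p)) := by
      refine ⟨hne2, hsegq, (1 + t') / (c * (1 + u)) - 1, ?_, ?_⟩
      · have : 1 < (1 + t') / (c * (1 + u)) :=
          (one_lt_div ha0).mpr (lt_of_lt_of_le ha1 h1t')
        linarith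
      · rw [key]
        have h2 : (1 + ((1 + t') / (c * (1 + u)) - 1)) * (c * (1 + u)) = 1 + t' := by
          field_simp
          ring
        rw [h2, ← hyeq]
        exact ht'I
    have hT0 : funkT0 I p (p + c • (x - p)) = (1 - c) / c := by
      have hIs : IsLeast {t : ℝ | 0 < t ∧
          p + c • (x - p) + t • (p + c • (x - p) - p) ∈ closure I} ((1 - c) / c) := by
        constructor
        · refine ⟨div_pos (by linarith) hc0, ?_⟩
          rw [key]
          have h3 : (1 + (1 - c) / c) * (c * (1 + u)) = 1 + u := by
            field_simp
            ring
          rw [h3, ← hxeq]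
          exact hxcl
        · rintro t ⟨ht0, hmem⟩
          rw [key] at hmem
          have hge : 1 + u ≤ (1 + t) * (c * (1 + u)) := by
            by_contra hcon
            push_neg at hcon
            exact star _ (mul_nonneg (by linarith) (le_of_lt ha0)) hcon hmem
          have h3 : (0:ℝ) < 1 + u := by linarith
          have hge' : 1 * (1 + u) ≤ ((1 + t) * c) * (1 + u) := by
            rw [one_mul, mul_assoc]; exact hge
          have h2 : 1 ≤ (1 + t) * c := le_of_mul_le_mul_right (by simpa using hge') h3
          have h2' : (1 + t) * c = c + t * c := by ring
          have h2'' : 1 ≤ c + t * c := by rw [← h2']; exact h2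
          rw [div_le_iff₀ hc0]
          linarith
      exact hIs.csInf_eq
    have hBnew : funkB I p (p + c • (x - p)) = x := by
      simp only [funkB, hT0]
      rw [key]
      have h3 : (1 + (1 - c) / c) * (c * (1 + u)) = 1 + u := by
        field_simp
        ring
      rw [h3]
      exact hxeq.symm
    refine ⟨hqΩ, hltq, ?_⟩
    rw [funkF_of_ne I hne2, hBnew]
    have hN' : (0:ℝ) < (1 + u) * ‖q' - p‖ :=
      mul_pos (by linarith) (norm_pos_iff.mpr (sub_ne_zero.mpr hpq'.symm))
    have hdx : dist p x = (1 + u) * ‖q' - p‖ := by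
      rw [dist_eq_norm, ← norm_neg, neg_sub, hxp, norm_smul, Real.norm_eq_abs,
        abs_of_pos (by linarith)]
    have hdq : dist (p + c • (x - p)) x = Real.exp (-r) * ((1 + u) * ‖q' - p‖) := by
      have hxq : x - (p + c • (x - p)) = ((1 - c) * (1 + u)) • (q' - p) := by
        rw [hxeq]
        module
      rw [dist_eq_norm, ← norm_neg, neg_sub, hxq, norm_smul, Real.norm_eq_abs,
        abs_of_pos (mul_pos (by linarith) (by linarith)), h1c, mul_assoc]
    rw [hdx, hdq, div_mul_eq_div_div_swap, div_self (ne_of_gt hN'),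
      Real.exp_neg, one_div, inv_inv, Real.log_exp]
end
end

section
/- Monotonicity of the timelike Funk metric under inclusion of convex sets: let I ⊆ Î be nonempty open convex subsets of E, with timelike Funk order and metric (<, F) associated to I and (<̂, F̂) associated to Î. If p, q ∈ E satisfy both p < q and p <̂ q, then F̂(p,q) ≥ F(p,q). -/
open RealInnerProductSpace
open scoped Classical

noncomputable section

lemma funkT0_pos {n : ℕ} (I : Set (Euc n)) (p q : Euc n)
    (hq : q ∉ closure I) (hex : ∃ t > (0:ℝ), q + t • (q - p) ∈ I) :
    0 < funkT0 I p q := by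
  have hcont : Continuous fun t : ℝ => q + t • (q - p) := by continuity
  have hopen : IsOpen ((fun t : ℝ => q + t • (q - p)) ⁻¹' (closure I)ᶜ) :=
    (isClosed_closure.isOpen_compl).preimage hcont
  have h0 : (0:ℝ) ∈ ((fun t : ℝ => q + t • (q - p)) ⁻¹' (closure I)ᶜ) := by
    simpa using hq
  obtain ⟨ε, hε, hball⟩ := Metric.isOpen_iff.1 hopen 0 h0
  obtain ⟨t, ht, htI⟩ := hex
  have hSne : {t : ℝ | 0 < t ∧ q + t • (q - p) ∈ closure I}.Nonempty :=
    ⟨t, ht, subset_closure htI⟩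
  have hle : ε ≤ funkT0 I p q := by
    apply le_csInf hSne
    intro s hs
    by_contra h
    push_neg at h
    have hmem : s ∈ Metric.ball (0:ℝ) ε := by
      simp only [Metric.mem_ball, Real.dist_eq, sub_zero, abs_of_pos hs.1]
      linarith
    exact (hball hmem) hs.2
  linarith

lemma funkF_eq {n : ℕ} (I : Set (Euc n)) (p q : Euc n) (hne : p ≠ q)
    (ht : 0 < funkT0 I p q) :
    funkF I p q = Real.log ((1 + funkT0 I p q) / funkT0 I p q) := by
  set t := funkT0 I p q
  have hd : (0:ℝ) < ‖q - p‖ := by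
    rw [norm_pos_iff, sub_ne_zero]; exact fun h => hne h.symm
  have h1 : dist p (funkB I p q) = (1 + t) * ‖q - p‖ := by
    rw [dist_eq_norm]
    have heq : p - (q + t • (q - p)) = -((1 + t) • (q - p)) := by module
    rw [funkB, heq, norm_neg, norm_smul, Real.norm_eq_abs,
      abs_of_pos (by linarith : (0:ℝ) < 1 + t)]
  have h2 : dist q (funkB I p q) = t * ‖q - p‖ := by
    rw [dist_eq_norm]
    have heq : q - (q + t • (q - p)) = -(t • (q - p)) := by module
    rw [funkB, heq, norm_neg, norm_smul, Real.norm_eq_abs, abs_of_pos ht]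
  rw [funkF, if_neg hne, h1, h2]
  congr 1
  field_simp

/-- monotonicity of the timelike Funk metric under inclusion of convex sets:
if `I ⊆ Î` and `p, q` satisfy both `p < q` (for `I`) and `p <̂ q` (for `Î`),
then `F̂(p,q) ≥ F(p,q)`. -/
theorem funkF_mono_of_subset {n : ℕ} (hn : 1 ≤ n) (I Ihat : Set (Euc n))
    (hne : I.Nonempty) (hop : IsOpen I) (hconv : Convex ℝ I)
    (hcl : closure I ≠ Set.univ)
    (hne' : Ihat.Nonempty) (hop' : IsOpen Ihat) (hconv' : Convex ℝ Ihat)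
    (hcl' : closure Ihat ≠ Set.univ)
    (hsub : I ⊆ Ihat)
    (p q : Euc n) (hpq : funkLt I p q) (hpq' : funkLt Ihat p q) :
    funkF I p q ≤ funkF Ihat p q := by
  obtain ⟨hne0, hseg, hex⟩ := hpq
  obtain ⟨_, hseg', hex'⟩ := hpq'
  have hqΩ : q ∉ closure I := hseg (right_mem_segment ℝ p q)
  have hqΩ' : q ∉ closure Ihat := hseg' (right_mem_segment ℝ p q)
  have ht : 0 < funkT0 I p q := funkT0_pos I p q hqΩ hex
  have ht' : 0 < funkT0 Ihat p q := funkT0_pos Ihat p q hqΩ' hex'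
  have hmono : funkT0 Ihat p q ≤ funkT0 I p q := by
    apply csInf_le_csInf
    · exact ⟨0, fun s hs => le_of_lt hs.1⟩
    · obtain ⟨t, htp, htI⟩ := hex
      exact ⟨t, htp, subset_closure htI⟩
    · intro t htm
      exact ⟨htm.1, closure_mono hsub htm.2⟩
  rw [funkF_eq I p q hne0 ht, funkF_eq Ihat p q hne0 ht']
  apply Real.log_le_log (by positivity)
  rw [div_le_div_iff₀ ht ht']
  nlinarith
end
end

section
/- The two formulas for the timelike Minkowski functional agree: for p ∈ Ω and v ∈ D(p), one has τ(p,v) > 0 and p + τ(p,v) • v ∈ K; every supporting hyperplane π = {x : ⟪u, x⟫ = c} ∈ 𝒫(p) satisfies ⟪u, v⟫ < 0; and P(p,v) = 1/τ(p,v) = ⨅ (infimum) over π ∈ 𝒫(p) of (−⟪u, v⟫) / (⟪u, p⟫ − c). -/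
open RealInnerProductSpace
open scoped Classical

noncomputable section

/-- the two formulas for the timelike Minkowski functional agree: for
`p ∈ Ω` and `v ∈ D(p)`, one has `τ(p,v) > 0`, `p + τ(p,v) • v ∈ K = frontier I`, every
supporting hyperplane `(u,c) ∈ 𝒫(p)` satisfies `⟪u,v⟫ < 0`, and
`P(p,v) = 1/τ(p,v) = ⨅_{(u,c) ∈ 𝒫(p)} (−⟪u,v⟫)/(⟪u,p⟫ − c)`. -/
theorem pmink_eq_iInf {n : ℕ} (hn : 1 ≤ n) (I : Set (Euc n))
    (hne : I.Nonempty) (hop : IsOpen I) (hconv : Convex ℝ I)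
    (hcl : closure I ≠ Set.univ)
    (p : Euc n) (hp : p ∈ Omega I) (v : Euc n) (hv : v ∈ Dcone I p) :
    0 < tauF I p v ∧
    p + tauF I p v • v ∈ frontier I ∧
    (∀ uc ∈ SuppHSep I p, ⟪uc.1, v⟫ < 0) ∧
    Pmink I p v = ⨅ uc : SuppHSep I p, (-⟪uc.1.1, v⟫) / (⟪uc.1.1, p⟫ - uc.1.2) := by
  obtain ⟨t₀, ht₀pos, ht₀I⟩ := hv
  set S : Set ℝ := {t : ℝ | 0 < t ∧ p + t • v ∈ closure I} with hSdef
  have hSne : S.Nonempty := ⟨t₀, ht₀pos, subset_closure ht₀I⟩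
  have hSbdd : BddBelow S := ⟨0, fun t ht => ht.1.le⟩
  have hτS : tauF I p v = sInf S := rfl
  have hcont : Continuous (fun t : ℝ => p + t • v) := by continuity
  have hpnot : p ∉ closure I := hp
  -- τ > 0
  have hτpos : 0 < tauF I p v := by
    have hopen : IsOpen ((fun t : ℝ => p + t • v) ⁻¹' (closure I)ᶜ) :=
      isClosed_closure.isOpen_compl.preimage hcont
    have h0 : (0:ℝ) ∈ (fun t : ℝ => p + t • v) ⁻¹' (closure I)ᶜ := by
      simpa using hpnot
    obtain ⟨ε, hε, hball⟩ := Metric.isOpen_iff.1 hopen 0 h0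
    have hle : ε ≤ tauF I p v := by
      rw [hτS]
      refine le_csInf hSne ?_
      intro t ht
      by_contra hlt
      push_neg at hlt
      have : t ∈ Metric.ball (0:ℝ) ε := by
        rw [Metric.mem_ball, Real.dist_eq, sub_zero, abs_of_pos ht.1]
        exact hlt
      exact (hball this) ht.2
    linarith
  -- the point is in the closure
  have hτclS : tauF I p v ∈ closure S := by
    rw [hτS]; exact csInf_mem_closure hSne hSbdd
  have hτcl : p + tauF I p v • v ∈ closure I := by
    have hclosed : IsClosed {t : ℝ | p + t • v ∈ closure I} :=
      isClosed_closure.preimage hcont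
    exact closure_minimal (fun t ht => ht.2) hclosed hτclS
  -- the point is not in I
  have hτnotI : p + tauF I p v • v ∉ I := by
    intro hmem
    have hopen2 : IsOpen ((fun t : ℝ => p + t • v) ⁻¹' I) := hop.preimage hcont
    obtain ⟨ε, hε, hball⟩ := Metric.isOpen_iff.1 hopen2 _ hmem
    set δ := min ε (tauF I p v) with hδ
    have hδpos : 0 < δ := lt_min hε hτpos
    have hδε : δ ≤ ε := min_le_left _ _
    have hδτ : δ ≤ tauF I p v := min_le_right _ _
    have htS : tauF I p v - δ/2 ∈ S := by
      constructor
      · linarith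
      · refine subset_closure (hball ?_)
        rw [Metric.mem_ball, Real.dist_eq]
        rw [show tauF I p v - δ/2 - tauF I p v = -(δ/2) by ring, abs_neg,
          abs_of_pos (by linarith)]
        linarith
    have := csInf_le hSbdd htS
    rw [← hτS] at this
    linarith
  have hfr : p + tauF I p v • v ∈ frontier I := by
    rw [hop.frontier_eq]; exact ⟨hτcl, hτnotI⟩
  -- every separating supporting hyperplane has ⟪u,v⟫ < 0
  have hsep : ∀ uc ∈ SuppHSep I p, ⟪uc.1, v⟫ < 0 := by
    rintro ⟨u, c⟩ ⟨⟨hu, hsub, -⟩, hcp⟩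
    have h1 : ⟪u, p + t₀ • v⟫ < c := hsub ht₀I
    rw [inner_add_right, real_inner_smul_right] at h1
    simp only at hcp h1 ⊢
    by_contra h
    push_neg at h
    nlinarith [mul_nonneg ht₀pos.le h]
  -- lower bound for every separating supporting hyperplane
  have hlb : ∀ uc : SuppHSep I p,
      1 / tauF I p v ≤ (-⟪uc.1.1, v⟫) / (⟪uc.1.1, p⟫ - uc.1.2) := by
    rintro ⟨⟨u', c'⟩, huc⟩
    have hv' : ⟪u', v⟫ < 0 := hsep (u', c') huc
    obtain ⟨⟨hu', hsub', -⟩, hcp'⟩ := huc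
    have hd : 0 < ⟪u', p⟫ - c' := by simp only at hcp' ⊢; linarith
    have hcl' : closure I ⊆ {x | ⟪u', x⟫ ≤ c'} :=
      closure_minimal (by intro x hx; simp only [Set.mem_setOf_eq]; exact (hsub' hx).le)
        (isClosed_le (continuous_const.inner continuous_id) continuous_const)
    have hb : ⟪u', p + tauF I p v • v⟫ ≤ c' := hcl' hτcl
    rw [inner_add_right, real_inner_smul_right] at hb
    rw [div_le_div_iff₀ hτpos hd]
    nlinarith
  -- construct the witness hyperplane at b = p + τ v
  obtain ⟨f, hf⟩ := geometric_hahn_banach_open_point hconv hop hτnotI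
  obtain ⟨a₀, ha₀⟩ := hne
  have hfne : f ≠ 0 := by
    intro h
    have := hf a₀ ha₀
    rw [h] at this
    simp at this
  set w := (InnerProductSpace.toDual ℝ (Euc n)).symm f with hw
  have hwx : ∀ x, ⟪w, x⟫ = f x := fun x => InnerProductSpace.toDual_symm_apply
  have hwne : w ≠ 0 := by
    intro h
    apply hfne
    ext x
    have := hwx x
    rw [h, inner_zero_left] at this
    simpa using this.symm
  have hwn : (0:ℝ) < ‖w‖ := norm_pos_iff.2 hwne
  set u : Euc n := ‖w‖⁻¹ • w with hu
  have hun : ‖u‖ = 1 := norm_smul_inv_norm hwne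
  have hux : ∀ x, ⟪u, x⟫ = ‖w‖⁻¹ * f x := by
    intro x
    rw [hu, real_inner_smul_left, hwx]
  set c : ℝ := ⟪u, p + tauF I p v • v⟫ with hc
  have hsubu : I ⊆ {x | ⟪u, x⟫ < c} := by
    intro x hx
    have : f x < f (p + tauF I p v • v) := hf x hx
    simp only [Set.mem_setOf_eq, hux, hc]
    exact mul_lt_mul_of_pos_left this (inv_pos.2 hwn)
  have hmemSH : (u, c) ∈ SuppH I :=
    ⟨hun, hsubu, ⟨p + tauF I p v • v, hτcl, rfl⟩⟩
  -- τ < t₀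
  have hτlt : tauF I p v < t₀ := by
    have hle : tauF I p v ≤ t₀ := by
      rw [hτS]; exact csInf_le hSbdd ⟨ht₀pos, subset_closure ht₀I⟩
    rcases hle.lt_or_eq with h | h
    · exact h
    · exfalso; apply hτnotI; rw [h]; exact ht₀I
  -- ⟪u,v⟫ < 0
  have huv : ⟪u, v⟫ < 0 := by
    have h1 : ⟪u, p + t₀ • v⟫ < c := hsubu ht₀I
    rw [hc, inner_add_right, inner_add_right, real_inner_smul_right,
      real_inner_smul_right] at h1
    by_contra h
    push_neg at h
    nlinarith [mul_le_mul_of_nonneg_right hτlt.le h]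
  have hcexp : c = ⟪u, p⟫ + tauF I p v * ⟪u, v⟫ := by
    rw [hc, inner_add_right, real_inner_smul_right]
  have hcp : c < ⟪u, p⟫ := by nlinarith [mul_pos hτpos (neg_pos.2 huv)]
  have hmemP : (u, c) ∈ SuppHSep I p := ⟨hmemSH, hcp⟩
  have hval : (-⟪u, v⟫) / (⟪u, p⟫ - c) = 1 / tauF I p v := by
    have hden : ⟪u, p⟫ - c = (-⟪u, v⟫) * tauF I p v := by
      rw [hcexp]; ring
    rw [hden, div_mul_eq_div_div, div_self (by linarith : -⟪u, v⟫ ≠ 0)]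
  have hBdd : BddBelow (Set.range fun uc : SuppHSep I p =>
      (-⟪uc.1.1, v⟫) / (⟪uc.1.1, p⟫ - uc.1.2)) := by
    refine ⟨1 / tauF I p v, ?_⟩
    rintro x ⟨uc, rfl⟩
    exact hlb uc
  haveI : Nonempty (SuppHSep I p) := ⟨⟨(u, c), hmemP⟩⟩
  refine ⟨hτpos, hfr, hsep, le_antisymm ?_ ?_⟩
  · exact le_ciInf hlb
  · calc (⨅ uc : SuppHSep I p, (-⟪uc.1.1, v⟫) / (⟪uc.1.1, p⟫ - uc.1.2))
        ≤ (-⟪u, v⟫) / (⟪u, p⟫ - c) := ciInf_le hBdd ⟨(u, c), hmemP⟩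
      _ = 1 / tauF I p v := hval
end
end

section
/- The functional P(p, ·) is a timelike Minkowski functional: for every p ∈ Ω, the set D(p) is an open convex cone not containing 0 (if v ∈ D(p) and λ > 0 then λ • v ∈ D(p)), and for all v, w ∈ D(p), λ > 0 and s ∈ (0,1): P(p,v) > 0; P(p, λ • v) = λ * P(p,v); (1−s) • v + s • w ∈ D(p); and P(p, (1−s) • v + s • w) ≥ (1−s) * P(p,v) + s * P(p,w) (reverse convexity). -/
open RealInnerProductSpace
open scoped Classical

noncomputable section

section FunkAux

open scoped Pointwise

variable {n : ℕ} {I : Set (Euc n)} {p v w : Euc n}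

lemma tauSet_nonempty (hv : v ∈ Dcone I p) :
    {t : ℝ | 0 < t ∧ p + t • v ∈ closure I}.Nonempty := by
  obtain ⟨t, ht, hm⟩ := hv
  exact ⟨t, ht, subset_closure hm⟩

lemma tauSet_bdd : BddBelow {t : ℝ | 0 < t ∧ p + t • v ∈ closure I} :=
  ⟨0, fun t ht => le_of_lt ht.1⟩

lemma dcone_ne (hp : p ∈ Omega I) (hv : v ∈ Dcone I p) : v ≠ 0 := by
  rintro rfl
  obtain ⟨t, ht, hm⟩ := hv
  simp only [smul_zero, add_zero] at hm
  exact hp (subset_closure hm)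

lemma tau_pos (hp : p ∈ Omega I) (hv : v ∈ Dcone I p) : 0 < tauF I p v := by
  have hv0 : (0:ℝ) < ‖v‖ := norm_pos_iff.mpr (dcone_ne hp hv)
  obtain ⟨ε, hε, hball⟩ :=
    Metric.isOpen_iff.mp isClosed_closure.isOpen_compl p hp
  refine lt_of_lt_of_le (show (0:ℝ) < ε / ‖v‖ from div_pos hε hv0) ?_
  refine le_csInf (tauSet_nonempty hv) ?_
  rintro t ⟨ht, hm⟩
  by_contra hlt
  push_neg at hlt
  have hdist : dist (p + t • v) p < ε := by
    rw [dist_eq_norm, add_sub_cancel_left, norm_smul, Real.norm_eq_abs,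
      abs_of_pos ht]
    calc t * ‖v‖ < (ε / ‖v‖) * ‖v‖ := by gcongr
      _ = ε := div_mul_cancel₀ ε hv0.ne'
  exact hball hdist hm

lemma tau_mem (hv : v ∈ Dcone I p) : p + tauF I p v • v ∈ closure I := by
  have hC : IsClosed {t : ℝ | p + t • v ∈ closure I} :=
    isClosed_closure.preimage
      (continuous_const.add (continuous_id.smul continuous_const))
  have h1 : tauF I p v ∈ closure {t : ℝ | 0 < t ∧ p + t • v ∈ closure I} :=
    csInf_mem_closure (tauSet_nonempty hv) tauSet_bdd
  have h2 := closure_mono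
    (show {t : ℝ | 0 < t ∧ p + t • v ∈ closure I} ⊆ {t : ℝ | p + t • v ∈ closure I}
      from fun t ht => ht.2) h1
  rwa [hC.closure_eq] at h2

lemma funk_combo (t s a b r : ℝ) (ht : t ≠ 0) (hs : s ≠ 0)
    (hr : r * (a / t) + r * (b / s) = 1) (p v w : Euc n) :
    (r * (a / t)) • (p + t • v) + (r * (b / s)) • (p + s • w)
      = p + r • (a • v + b • w) := by
  match_scalars
  · linear_combination hr
  · field_simp
  · field_simp

lemma tau_smul (l : ℝ) (hl : 0 < l) :
    tauF I p (l • v) = l⁻¹ * tauF I p v := by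
  have hset : {t : ℝ | 0 < t ∧ p + t • (l • v) ∈ closure I}
      = l⁻¹ • {t : ℝ | 0 < t ∧ p + t • v ∈ closure I} := by
    ext t
    rw [Set.mem_smul_set_iff_inv_smul_mem₀ (inv_ne_zero hl.ne')]
    simp only [Set.mem_setOf_eq, smul_eq_mul, inv_inv, smul_smul]
    constructor
    · rintro ⟨h1, h2⟩
      exact ⟨by positivity, by rwa [mul_comm l t]⟩
    · rintro ⟨h1, h2⟩
      refine ⟨?_, by rwa [mul_comm t l]⟩
      nlinarith
  rw [tauF, hset, Real.sInf_smul_of_nonneg (by positivity), smul_eq_mul, tauF]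

end FunkAux

/-- `P(p,·)` is a timelike Minkowski functional: `D(p)` is an open convex
cone not containing `0`, and on it `P(p,·)` is positive, positively homogeneous and
reverse-convex (concave). -/
theorem pmink_is_timelike_minkowski {n : ℕ} (hn : 1 ≤ n) (I : Set (Euc n))
    (hne : I.Nonempty) (hop : IsOpen I) (hconv : Convex ℝ I)
    (hcl : closure I ≠ Set.univ)
    (p : Euc n) (hp : p ∈ Omega I) :
    IsOpen (Dcone I p) ∧ Convex ℝ (Dcone I p) ∧ (0 : Euc n) ∉ Dcone I p ∧
    (∀ v ∈ Dcone I p, ∀ l : ℝ, 0 < l → l • v ∈ Dcone I p) ∧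
    (∀ v ∈ Dcone I p, ∀ w ∈ Dcone I p, ∀ l : ℝ, 0 < l → ∀ s ∈ Set.Ioo (0:ℝ) 1,
      0 < Pmink I p v ∧
      Pmink I p (l • v) = l * Pmink I p v ∧
      (1 - s) • v + s • w ∈ Dcone I p ∧
      (1 - s) * Pmink I p v + s * Pmink I p w ≤ Pmink I p ((1 - s) • v + s • w)) := by
  have hDopen : IsOpen (Dcone I p) := by
    have hrw : Dcone I p = ⋃ t ∈ Set.Ioi (0:ℝ), (fun v : Euc n => p + t • v) ⁻¹' I := by
      ext v
      simp only [Dcone, Set.mem_setOf_eq, Set.mem_iUnion, Set.mem_preimage,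
        Set.mem_Ioi, exists_prop]
    rw [hrw]
    exact isOpen_biUnion fun t _ => hop.preimage
      (continuous_const.add (continuous_const_smul t))
  have hDconv : Convex ℝ (Dcone I p) := by
    rintro v ⟨t, ht, hvI⟩ w ⟨s, hs, hwI⟩ a b ha hb hab
    have hpos : 0 < a / t + b / s := by
      rcases ha.lt_or_eq with h | h
      · exact add_pos_of_pos_of_nonneg (div_pos h ht) (div_nonneg hb hs.le)
      · have hb1 : b = 1 := by linarith
        rw [← h, hb1]
        simpa using div_pos one_pos hs
    set r := (a / t + b / s)⁻¹ with hrdef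
    have hr : 0 < r := inv_pos.mpr hpos
    have hlam : r * (a / t) + r * (b / s) = 1 := by
      rw [← mul_add, hrdef, inv_mul_cancel₀ hpos.ne']
    refine ⟨r, hr, ?_⟩
    rw [← funk_combo t s a b r ht.ne' hs.ne' hlam]
    exact hconv hvI hwI (mul_nonneg hr.le (div_nonneg ha ht.le))
      (mul_nonneg hr.le (div_nonneg hb hs.le)) hlam
  refine ⟨hDopen, hDconv, ?_, ?_, ?_⟩
  · rintro ⟨t, ht, hm⟩
    simp only [smul_zero, add_zero] at hm
    exact hp (subset_closure hm)
  · rintro v ⟨t, ht, hm⟩ l hl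
    refine ⟨t / l, div_pos ht hl, ?_⟩
    rw [smul_smul, div_mul_cancel₀ t hl.ne']
    exact hm
  · intro v hv w hw l hl s hs
    have hτv := tau_pos hp hv
    have hτw := tau_pos hp hw
    have ha : (0:ℝ) < 1 - s := by linarith [hs.2]
    have hb : (0:ℝ) < s := hs.1
    have hmem : (1 - s) • v + s • w ∈ Dcone I p :=
      hDconv hv hw ha.le hb.le (by ring)
    refine ⟨one_div_pos.mpr hτv, ?_, hmem, ?_⟩
    · rw [Pmink, Pmink, tau_smul l hl, one_div, one_div, mul_inv, inv_inv]
    · -- reverse convexity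
      have hτu := tau_pos hp hmem
      have hpos : 0 < (1 - s) / tauF I p v + s / tauF I p w :=
        add_pos (div_pos ha hτv) (div_pos hb hτw)
      set r := ((1 - s) / tauF I p v + s / tauF I p w)⁻¹ with hrdef
      have hr : 0 < r := inv_pos.mpr hpos
      have hlam : r * ((1 - s) / tauF I p v) + r * (s / tauF I p w) = 1 := by
        rw [← mul_add, hrdef, inv_mul_cancel₀ hpos.ne']
      have hrI : p + r • ((1 - s) • v + s • w) ∈ closure I := by
        rw [← funk_combo (tauF I p v) (tauF I p w) (1 - s) s r hτv.ne' hτw.ne'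
          hlam]
        exact hconv.closure (tau_mem hv) (tau_mem hw)
          (mul_nonneg hr.le (div_nonneg ha.le hτv.le))
          (mul_nonneg hr.le (div_nonneg hb.le hτw.le)) hlam
      have hle : tauF I p ((1 - s) • v + s • w) ≤ r :=
        csInf_le tauSet_bdd ⟨hr, hrI⟩
      have h1 : 1 / r ≤ 1 / tauF I p ((1 - s) • v + s • w) :=
        one_div_le_one_div_of_le hτu hle
      have h2 : 1 / r = (1 - s) * Pmink I p v + s * Pmink I p w := by
        rw [hrdef, one_div, inv_inv, Pmink, Pmink]
        field_simp
      rw [← h2, Pmink]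
      exact h1
end
end

section
/- The timelike length of the straight segment equals the Funk distance: for p, q ∈ Ω with p < q, the vector q − p lies in D(p + t • (q − p)) for every t ∈ [0,1], the function t ↦ P(p + t • (q − p), q − p) is integrable on [0,1], and ∫₀¹ P(p + t • (q − p), q − p) dt = F(p,q). -/
open RealInnerProductSpace
open scoped Classical

noncomputable section

/-- the timelike length of the straight segment equals the Funk distance:
for `p < q`, the vector `q − p` is timelike along the segment, the integrand is
integrable on `[0,1]`, and `∫₀¹ P(p + t•(q−p), q−p) dt = F(p,q)`. -/
theorem funkF_eq_integral_pmink {n : ℕ} (hn : 1 ≤ n) (I : Set (Euc n))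
    (hne : I.Nonempty) (hop : IsOpen I) (hconv : Convex ℝ I)
    (hcl : closure I ≠ Set.univ)
    (p q : Euc n) (hp : p ∈ Omega I) (hq : q ∈ Omega I)
    (hpq : funkLt I p q) :
    (∀ t ∈ Set.Icc (0:ℝ) 1, q - p ∈ Dcone I (p + t • (q - p))) ∧
    MeasureTheory.IntegrableOn (fun t => Pmink I (p + t • (q - p)) (q - p))
      (Set.Icc (0:ℝ) 1) ∧
    (∫ t in (0:ℝ)..1, Pmink I (p + t • (q - p)) (q - p)) = funkF I p q := by
  obtain ⟨hne', hseg, t₁, ht₁, hqt₁⟩ := hpq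
  set v := q - p with hv
  have hv0 : v ≠ 0 := sub_ne_zero.mpr (Ne.symm hne')
  have hnv : 0 < ‖v‖ := norm_pos_iff.mpr hv0
  set S : Set ℝ := {t : ℝ | 0 < t ∧ q + t • v ∈ closure I} with hS
  have hSne : S.Nonempty := ⟨t₁, ht₁, subset_closure hqt₁⟩
  obtain ⟨ε, hε, hball⟩ := Metric.isOpen_iff.mp isClosed_closure.isOpen_compl q hq
  set ε' : ℝ := ε / ‖v‖ with hε'
  have hε'pos : 0 < ε' := div_pos hε hnv
  have hlow : ∀ t ∈ S, ε' ≤ t := by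
    rintro t ⟨ht, htc⟩
    by_contra h
    push_neg at h
    have hmem : q + t • v ∈ Metric.ball q ε := by
      rw [Metric.mem_ball, dist_eq_norm]
      have : q + t • v - q = t • v := by module
      rw [this, norm_smul, Real.norm_eq_abs, abs_of_pos ht]
      calc t * ‖v‖ < ε' * ‖v‖ := by nlinarith
        _ = ε := div_mul_cancel₀ ε hnv.ne'
    exact (hball hmem) htc
  have hbdd : BddBelow S := ⟨ε', hlow⟩
  set t₀ := sInf S with ht₀
  have ht₀pos : 0 < t₀ := lt_of_lt_of_le hε'pos (le_csInf hSne hlow)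
  have hSC : S = Set.Ici ε' ∩ ((fun t : ℝ => q + t • v) ⁻¹' closure I) := by
    ext t
    constructor
    · rintro ⟨h1, h2⟩
      exact ⟨hlow t ⟨h1, h2⟩, h2⟩
    · rintro ⟨h1, h2⟩
      exact ⟨lt_of_lt_of_le hε'pos h1, h2⟩
  have hSclosed : IsClosed S := by
    rw [hSC]
    exact isClosed_Ici.inter (isClosed_closure.preimage (by fun_prop))
  have hbmem : q + t₀ • v ∈ closure I := (hSclosed.csInf_mem hSne hbdd).2
  set T : ℝ := 1 + t₀ with hT
  have hT1 : 1 < T := by rw [hT]; linarith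
  have hkey : ∀ u : ℝ, 0 ≤ u → u < T → p + u • v ∉ closure I := by
    intro u hu0 huT hc
    rcases le_or_gt u 1 with h1 | h1
    · have hmem : p + u • v ∈ segment ℝ p q := by
        rw [segment_eq_image']
        exact ⟨u, ⟨hu0, h1⟩, by rw [hv]⟩
      exact hseg hmem hc
    · have hs : u - 1 ∈ S := by
        refine ⟨by linarith, ?_⟩
        have e : q + (u - 1) • v = p + u • v := by rw [hv]; module
        rw [e]; exact hc
      have := csInf_le hbdd hs
      rw [hT] at huT
      linarith
  have htau : ∀ t ∈ Set.Icc (0:ℝ) 1, tauF I (p + t • v) v = T - t := by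
    rintro t ⟨ht0, ht1⟩
    have hleast : IsLeast {s : ℝ | 0 < s ∧ (p + t • v) + s • v ∈ closure I} (T - t) := by
      constructor
      · refine ⟨by linarith, ?_⟩
        have e : p + t • v + (T - t) • v = q + t₀ • v := by rw [hT, hv]; module
        rw [e]; exact hbmem
      · rintro s ⟨hs0, hsc⟩
        by_contra h
        push_neg at h
        have e : p + t • v + s • v = p + (t + s) • v := by module
        rw [e] at hsc
        exact hkey (t + s) (by linarith) (by linarith) hsc
    rw [tauF, hleast.csInf_eq]
  have hPe : ∀ t ∈ Set.Icc (0:ℝ) 1, Pmink I (p + t • v) v = (T - t)⁻¹ := by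
    intro t ht
    rw [Pmink, htau t ht, one_div]
  have hD : ∀ t ∈ Set.Icc (0:ℝ) 1, v ∈ Dcone I (p + t • v) := by
    rintro t ⟨ht0, ht1⟩
    refine ⟨1 + t₁ - t, by linarith, ?_⟩
    have e : p + t • v + (1 + t₁ - t) • v = q + t₁ • v := by rw [hv]; module
    rw [e]; exact hqt₁
  have hTt : ∀ t ∈ Set.Icc (0:ℝ) 1, (0:ℝ) < T - t := by
    rintro t ⟨ht0, ht1⟩; linarith
  have hcont : ContinuousOn (fun t : ℝ => (T - t)⁻¹) (Set.Icc 0 1) := by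
    apply ContinuousOn.inv₀
    · fun_prop
    · intro t ht
      exact (hTt t ht).ne'
  have hint : MeasureTheory.IntegrableOn (fun t : ℝ => (T - t)⁻¹) (Set.Icc (0:ℝ) 1) :=
    hcont.integrableOn_Icc
  have hint2 : MeasureTheory.IntegrableOn (fun t => Pmink I (p + t • v) v) (Set.Icc (0:ℝ) 1) := by
    apply hint.congr_fun (fun t ht => (hPe t ht).symm) measurableSet_Icc
  have hIcc : Set.uIcc (0:ℝ) 1 = Set.Icc 0 1 := Set.uIcc_of_le zero_le_one
  have hIeq : (∫ t in (0:ℝ)..1, Pmink I (p + t • v) v) = ∫ t in (0:ℝ)..1, (T - t)⁻¹ := by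
    apply intervalIntegral.integral_congr
    rw [hIcc]
    exact hPe
  have hftc : (∫ t in (0:ℝ)..1, (T - t)⁻¹) = Real.log T - Real.log t₀ := by
    have hderiv : ∀ t ∈ Set.uIcc (0:ℝ) 1,
        HasDerivAt (fun s : ℝ => -Real.log (T - s)) ((T - t)⁻¹) t := by
      intro t ht
      rw [hIcc] at ht
      have hne0 : T - t ≠ 0 := (hTt t ht).ne'
      have h1 : HasDerivAt (fun s : ℝ => T - s) (-1) t := (hasDerivAt_id t).const_sub T
      have h2 := (Real.hasDerivAt_log hne0).comp t h1
      have h3 := h2.neg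
      exact h3.congr_deriv (by ring)
    have hii : IntervalIntegrable (fun t : ℝ => (T - t)⁻¹) MeasureTheory.volume 0 1 := by
      apply ContinuousOn.intervalIntegrable
      rw [hIcc]; exact hcont
    rw [intervalIntegral.integral_eq_sub_of_hasDerivAt hderiv hii]
    have e1 : T - 1 = t₀ := by rw [hT]; ring
    rw [e1]
    ring_nf
  have ht0e : funkT0 I p q = t₀ := by
    rw [ht₀, hS, hv]
    rfl
  have hFeq : funkF I p q = Real.log T - Real.log t₀ := by
    rw [funkF, if_neg hne']
    have eb : funkB I p q = q + t₀ • v := by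
      rw [funkB, ht0e, hv]
    have e1 : dist p (funkB I p q) = T * ‖v‖ := by
      rw [eb, dist_eq_norm]
      have e : p - (q + t₀ • v) = -(T • v) := by rw [hT, hv]; module
      rw [e, norm_neg, norm_smul, Real.norm_eq_abs, abs_of_pos (by linarith : (0:ℝ) < T)]
    have e2 : dist q (funkB I p q) = t₀ * ‖v‖ := by
      rw [eb, dist_eq_norm]
      have e : q - (q + t₀ • v) = -(t₀ • v) := by module
      rw [e, norm_neg, norm_smul, Real.norm_eq_abs, abs_of_pos ht₀pos]
    rw [e1, e2]
    have e3 : T * ‖v‖ / (t₀ * ‖v‖) = T / t₀ := by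
      field_simp
    rw [e3, Real.log_div (by linarith : T ≠ 0) ht₀pos.ne']
  exact ⟨hD, hint2, by rw [hIeq, hftc, hFeq]⟩
end
end
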